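/- arXiv:1512.00726 — 11 statements merged into one kernel-verified Lean document; each statement's English description precedes it below -/
import Mathlib

section
/- Let G be a nontrivial connected graph. Then tpc(G) = 1 if and only if G is a complete graph, and if G is not complete then tpc(G) ≥ 3. -/
open SimpleGraph

variable {V : Type*} {α : Type*}

/-- A walk in a total-colored graph (vertex coloring `cv`, edge coloring `ce`) is a
*total proper* walk if (i) any two adjacent edges on it differ in color, (ii) any two
internal adjacent vertices on it differ in color, and (iii) any internal vertex differs
in color from its incident edges on the walk. -/
def IsTotalProperWalk {G : SimpleGraph V} (cv : V → α) (ce : Sym2 V → α)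
    {u v : V} (w : G.Walk u v) : Prop :=
  (∀ i : ℕ, i + 1 < w.length →
      ce (w.edges.getD i s(u, u)) ≠ ce (w.edges.getD (i + 1) s(u, u))) ∧
  (∀ i : ℕ, 1 ≤ i → i + 1 < w.length →
      cv (w.support.getD i u) ≠ cv (w.support.getD (i + 1) u)) ∧
  (∀ i : ℕ, 1 ≤ i → i < w.length →
      cv (w.support.getD i u) ≠ ce (w.edges.getD (i - 1) s(u, u)) ∧
      cv (w.support.getD i u) ≠ ce (w.edges.getD i s(u, u)))

/-- A total-colored graph is total proper connected if any two vertices are joined by a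
total proper path. -/
def TotalProperConnected (G : SimpleGraph V) (cv : V → α) (ce : Sym2 V → α) : Prop :=
  ∀ u v : V, ∃ w : G.Walk u v, w.IsPath ∧ IsTotalProperWalk cv ce w

/-- The total proper connection number: the smallest number of colors in a total coloring
making the graph total proper connected. -/
noncomputable def tpc (G : SimpleGraph V) : ℕ :=
  sInf {k | ∃ (cv : V → Fin k) (ce : Sym2 V → Fin k), TotalProperConnected G cv ce}

-- injective total coloring makes any path total proper
lemma rainbow_tpw {G : SimpleGraph V} (cv : V → α) (ce : Sym2 V → α)
    (hcv : Function.Injective cv) (hce : Function.Injective ce)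
    (hdisj : ∀ x e, cv x ≠ ce e)
    {u v : V} (w : G.Walk u v) (hp : w.IsPath) : IsTotalProperWalk cv ce w := by
  have hen : w.edges.Nodup := hp.isTrail.edges_nodup
  have hsn : w.support.Nodup := hp.support_nodup
  have hel : w.edges.length = w.length := w.length_edges
  have hsl : w.support.length = w.length + 1 := w.length_support
  refine ⟨?_, ?_, ?_⟩
  · intro i hi
    rw [List.getD_eq_getElem _ _ (by omega), List.getD_eq_getElem _ _ (by omega)]
    intro h
    have := hce h
    rw [hen.getElem_inj_iff] at this
    omega
  · intro i h1 hi
    rw [List.getD_eq_getElem _ _ (by omega), List.getD_eq_getElem _ _ (by omega)]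
    intro h
    have := hcv h
    rw [hsn.getElem_inj_iff] at this
    omega
  · intro i h1 hi
    exact ⟨hdisj _ _, hdisj _ _⟩

lemma exists_coloring [Fintype V] (G : SimpleGraph V) (hG : G.Connected) :
    ∃ k, ∃ (cv : V → Fin k) (ce : Sym2 V → Fin k), TotalProperConnected G cv ce := by
  classical
  set n := Fintype.card V
  set m := Fintype.card (Sym2 V)
  refine ⟨n + m, fun x => Fin.castAdd m ((Fintype.equivFin V) x),
    fun e => Fin.natAdd n ((Fintype.equivFin (Sym2 V)) e), ?_⟩
  intro u v
  obtain ⟨w⟩ := hG.preconnected u v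
  refine ⟨w.toPath, w.toPath.2, ?_⟩
  apply rainbow_tpw
  · intro a b h
    apply (Fintype.equivFin V).injective
    exact Fin.castAdd_injective _ _ h
  · intro a b h
    apply (Fintype.equivFin (Sym2 V)).injective
    have h2 := congrArg Fin.val h
    simp only [Fin.natAdd] at h2
    exact Fin.ext (by omega)
  · intro x e
    intro h
    have := congrArg Fin.val h
    simp [Fin.castAdd, Fin.natAdd] at this
    have := ((Fintype.equivFin V) x).isLt
    omega
  · exact w.toPath.2

/-- For a nontrivial connected graph `G`: `tpc G = 1` iff `G` is complete, and if `G` is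
not complete then `tpc G ≥ 3`. -/
theorem stmt_0 {V : Type*} [Fintype V] (G : SimpleGraph V)
    (hG : G.Connected) (hV : Nontrivial V) :
    (tpc G = 1 ↔ G = (⊤ : SimpleGraph V)) ∧
    (G ≠ (⊤ : SimpleGraph V) → 3 ≤ tpc G) := by
  classical
  set S := {k | ∃ (cv : V → Fin k) (ce : Sym2 V → Fin k), TotalProperConnected G cv ce} with hS
  have hSne : S.Nonempty := exists_coloring G hG
  have h0 : 0 ∉ S := by
    rintro ⟨cv, -, -⟩
    obtain ⟨x, -, -⟩ := hV
    exact (cv x).elim0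
  -- one-color connectivity implies complete
  have hone : ∀ cv ce, TotalProperConnected G cv (ce : Sym2 V → Fin 1) → G = ⊤ := by
    intro cv ce h
    ext a b
    simp only [top_adj]
    constructor
    · intro hab; exact hab.ne
    · intro hab
      obtain ⟨w, hp, ht⟩ := h a b
      have hlen : w.length = 1 := by
        by_contra hne
        rcases Nat.lt_or_ge w.length 2 with hl | hl
        · interval_cases h' : w.length
          · exact hab (w.eq_of_length_eq_zero h')
          · exact hne rfl
        · exact ht.1 0 (by omega) (Subsingleton.elim _ _)
      exact Walk.adj_of_length_eq_one hlen
  -- complete implies 1 ∈ S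
  have hcomp : G = ⊤ → 1 ∈ S := by
    intro h
    refine ⟨fun _ => 0, fun _ => 0, ?_⟩
    intro a b
    by_cases hab : a = b
    · subst hab
      exact ⟨Walk.nil, Walk.IsPath.nil, by
        refine ⟨?_, ?_, ?_⟩ <;> intro i <;> simp [Walk.length_nil] <;> omega⟩
    · have hadj : G.Adj a b := by rw [h]; exact hab
      refine ⟨Walk.cons hadj Walk.nil, ?_, ?_⟩
      · simp [Walk.isPath_def, hab]
      · refine ⟨?_, ?_, ?_⟩ <;> intro i <;> simp <;> omega
  -- 2 colors impossible when not complete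
  have h2 : G ≠ ⊤ → 2 ∉ S := by
    intro hne ⟨cv, ce, h⟩
    obtain ⟨a, b, hab, hnadj⟩ : ∃ a b, a ≠ b ∧ ¬ G.Adj a b := by
      by_contra hc
      push_neg at hc
      apply hne
      ext x y
      simp only [top_adj]
      exact ⟨Adj.ne, hc x y⟩
    obtain ⟨w, hp, ht⟩ := h a b
    have hlen : 2 ≤ w.length := by
      by_contra hl
      push_neg at hl
      interval_cases h' : w.length
      · exact hab (w.eq_of_length_eq_zero h')
      · exact hnadj (Walk.adj_of_length_eq_one h')
    have he := ht.1 0 (by omega)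
    have hx := ht.2.2 1 le_rfl (by omega)
    have key : ∀ c1 c2 c3 : Fin 2, c1 ≠ c2 → c3 ≠ c1 → c3 ≠ c2 → False := by decide
    exact key _ _ _ he hx.1 hx.2
  constructor
  · constructor
    · intro h1
      have : S.Nonempty := hSne
      have hmem : 1 ∈ S := h1 ▸ Nat.sInf_mem this
      obtain ⟨cv, ce, h⟩ := hmem
      exact hone cv ce h
    · intro h
      have h1 : 1 ∈ S := hcomp h
      have hle : tpc G ≤ 1 := Nat.sInf_le h1
      have hge : 1 ≤ tpc G := by
        rw [Nat.one_le_iff_ne_zero]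
        intro hz
        rcases (Nat.sInf_eq_zero.mp hz) with h' | h'
        · exact h0 h'
        · exact hSne.ne_empty h'
      omega
  · intro hne
    have := Nat.sInf_mem hSne
    have hge : 3 ≤ sInf S := by
      by_contra hl
      push_neg at hl
      have hmem := Nat.sInf_mem hSne
      interval_cases h' : sInf S
      · exact h0 hmem
      · obtain ⟨cv, ce, h⟩ := hmem
        exact hne (hone cv ce h)
      · exact h2 hne hmem
    exact hge
end

section
/- Let G be a connected graph of order n ≥ 3 that contains a bridge, and let b be the maximum number of bridges of G incident with a single vertex. Then tpc(G) ≥ b + 1. -/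
open SimpleGraph

variable {V : Type*} {α : Type*}

-- helper: support entries
lemma my_support_zero {G : SimpleGraph V} {a c : V} (p : G.Walk a c) :
    p.support[0]'(by simp) = a := by
  cases p <;> rfl

lemma my_support_length {G : SimpleGraph V} {a c : V} (p : G.Walk a c) :
    p.support[p.length]'(by simp) = c := by
  induction p with
  | nil => rfl
  | cons h q ih => simpa using ih

lemma my_edge_eq {G : SimpleGraph V} {a c : V} (p : G.Walk a c) (m : ℕ) (hm : m < p.length) :
    p.edges[m]'(by simpa using hm) =
      s(p.support[m]'(by simp; omega), p.support[m + 1]'(by simp; omega)) := by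
  induction p generalizing m with
  | nil => simp at hm
  | @cons u x c h q ih =>
    cases m with
    | zero =>
      simp only [Walk.edges_cons, Walk.support_cons, List.getElem_cons_zero,
        List.getElem_cons_succ]
      rw [my_support_zero]
    | succ m =>
      simp only [Walk.edges_cons, Walk.support_cons, List.getElem_cons_succ]
      exact ih m (by simpa using hm)

lemma tpw_vertex_ne_edge {G : SimpleGraph V} {cv : V → α} {ce : Sym2 V → α}
    {a c : V} {p : G.Walk a c} (hp : p.IsPath) (ht : IsTotalProperWalk cv ce p)
    {v : V} {e : Sym2 V} (hva : v ≠ a) (hvc : v ≠ c)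
    (he : e ∈ p.edges) (hve : v ∈ e) : cv v ≠ ce e := by
  obtain ⟨m, hm, hme⟩ := List.getElem_of_mem he
  have hm' : m < p.length := by simpa using hm
  have hedge := my_edge_eq p m hm'
  rw [hme] at hedge
  have hsuplen : p.support.length = p.length + 1 := p.length_support
  rw [hedge] at hve
  rcases Sym2.mem_iff.mp hve with hv | hv
  · -- v = support[m]
    have hm0 : m ≠ 0 := by
      intro h; subst h; rw [my_support_zero] at hv; exact hva hv
    have h1 : 1 ≤ m := Nat.one_le_iff_ne_zero.mpr hm0
    have := (ht.2.2 m h1 hm').2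
    rw [List.getD_eq_getElem _ _ (by omega : m < p.support.length),
      List.getD_eq_getElem _ _ (by simpa using hm')] at this
    rw [← hv, hme] at this
    exact this
  · -- v = support[m+1]
    have hml : m + 1 ≠ p.length := by
      intro h
      have : p.support[m+1]'(by omega) = c := by
        have := my_support_length p
        simp_rw [h] at hv ⊢
        exact this
      rw [this] at hv; exact hvc hv
    have hm1 : m + 1 < p.length := by omega
    have := (ht.2.2 (m+1) (by omega) hm1).1
    rw [List.getD_eq_getElem _ _ (by omega : m + 1 < p.support.length),
      List.getD_eq_getElem _ _ (by simp; omega : m + 1 - 1 < p.edges.length)] at this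
    simp only [Nat.add_sub_cancel] at this
    rw [← hv, hme] at this
    exact this

lemma tpw_edges_ne {G : SimpleGraph V} {cv : V → α} {ce : Sym2 V → α}
    {a c : V} {p : G.Walk a c} (hp : p.IsPath) (ht : IsTotalProperWalk cv ce p)
    {v : V} {e1 e2 : Sym2 V} (h1 : e1 ∈ p.edges) (h2 : e2 ∈ p.edges)
    (hv1 : v ∈ e1) (hv2 : v ∈ e2) (hne : e1 ≠ e2) : ce e1 ≠ ce e2 := by
  obtain ⟨m1, hm1, hme1⟩ := List.getElem_of_mem h1
  obtain ⟨m2, hm2, hme2⟩ := List.getElem_of_mem h2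
  have hm1' : m1 < p.length := by simpa using hm1
  have hm2' : m2 < p.length := by simpa using hm2
  have he1 := my_edge_eq p m1 hm1'
  have he2 := my_edge_eq p m2 hm2'
  rw [hme1] at he1; rw [hme2] at he2
  have hnodup := hp.support_nodup
  have hmm : m1 ≠ m2 := by
    intro h; subst h; rw [hme1] at hme2; exact hne hme2
  rw [he1] at hv1; rw [he2] at hv2
  have key : ∀ i j : ℕ, (hi : i < p.support.length) → (hj : j < p.support.length) →
      p.support[i] = p.support[j] → i = j := fun i j hi hj h =>
    (hnodup.getElem_inj_iff).mp h
  have hsl : p.support.length = p.length + 1 := p.length_support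
  rcases Sym2.mem_iff.mp hv1 with hx1 | hx1 <;> rcases Sym2.mem_iff.mp hv2 with hx2 | hx2
  · exact absurd (key m1 m2 (by omega) (by omega) (hx1.symm.trans hx2)) hmm
  · -- v = s[m1] = s[m2+1] ⇒ m1 = m2+1
    have : m1 = m2 + 1 := key m1 (m2+1) (by omega) (by omega) (hx1.symm.trans hx2)
    subst this
    have := ht.1 m2 hm1'
    rw [List.getD_eq_getElem _ _ (by simp; omega : m2 < p.edges.length),
      List.getD_eq_getElem _ _ (by simpa using hm1' : m2 + 1 < p.edges.length)] at this
    rw [hme1, hme2] at this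
    exact this.symm
  · have : m1 + 1 = m2 := key (m1+1) m2 (by omega) (by omega) (hx1.symm.trans hx2)
    subst this
    have := ht.1 m1 hm2'
    rw [List.getD_eq_getElem _ _ (by simp; omega : m1 < p.edges.length),
      List.getD_eq_getElem _ _ (by simpa using hm2' : m1 + 1 < p.edges.length)] at this
    rw [hme1, hme2] at this
    exact this
  · exact absurd (key (m1+1) (m2+1) (by omega) (by omega) (hx1.symm.trans hx2))
      (by omega)

-- a walk from x to y where y is G-adjacent to v must contain a bridge s(v,x)
lemma bridge_mem_walk {G : SimpleGraph V} {v x y : V} (hbr : G.IsBridge s(v, x))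
    (hxy : x ≠ y) (hadj : G.Adj v y) (q : G.Walk x y) : s(v, x) ∈ q.edges := by
  have h := isBridge_iff_adj_and_forall_walk_mem_edges.mp hbr
  have hw : s(v, x) ∈ ((q.append (Walk.cons hadj.symm Walk.nil)).reverse).edges :=
    h _
  rw [Walk.edges_reverse, List.mem_reverse, Walk.edges_append] at hw
  rcases List.mem_append.mp hw with h' | h'
  · exact h'
  · exfalso
    simp only [Walk.edges_cons, Walk.edges_nil, List.mem_singleton] at h'
    rw [Sym2.eq_iff] at h'
    rcases h' with ⟨hv, hx⟩ | ⟨hv, hx⟩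
    · exact hadj.ne hv
    · exact hxy hx

lemma tpc_set_nonempty {V : Type*} [Fintype V] (G : SimpleGraph V) (hG : G.Connected) :
    {k | ∃ (cv : V → Fin k) (ce : Sym2 V → Fin k), TotalProperConnected G cv ce}.Nonempty := by
  classical
  haveI : Fintype (Sym2 V) := Fintype.ofFinite _
  set n1 := Fintype.card V with hn1
  set n2 := Fintype.card (Sym2 V) with hn2
  set cv : V → Fin (n1 + n2) := fun v => Fin.castAdd n2 (Fintype.equivFin V v) with hcv
  set ce : Sym2 V → Fin (n1 + n2) := fun e => Fin.natAdd n1 (Fintype.equivFin (Sym2 V) e)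
    with hce
  have cvinj : Function.Injective cv := by
    intro a b' h
    apply (Fintype.equivFin V).injective
    apply Fin.ext
    have := congrArg Fin.val h
    simpa [hcv] using this
  have ceinj : Function.Injective ce := by
    intro a b' h
    apply (Fintype.equivFin (Sym2 V)).injective
    apply Fin.ext
    have := congrArg Fin.val h
    simp only [hce, Fin.coe_natAdd] at this
    omega
  have disj : ∀ (x : V) (e : Sym2 V), cv x ≠ ce e := by
    intro x e h
    have := congrArg Fin.val h
    simp only [hcv, hce, Fin.coe_castAdd, Fin.coe_natAdd] at this
    have hlt : ((Fintype.equivFin V) x : ℕ) < n1 := Fin.is_lt _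
    omega
  refine ⟨n1 + n2, cv, ce, fun u v => ?_⟩
  obtain ⟨w⟩ := hG.preconnected u v
  refine ⟨w.toPath.1, w.toPath.2, ?_, ?_, ?_⟩
  · intro i hi
    have hel : (w.toPath.1.edges).length = w.toPath.1.length := Walk.length_edges _
    rw [List.getD_eq_getElem _ _ (by omega : i < (w.toPath.1.edges).length),
      List.getD_eq_getElem _ _ (by omega : i + 1 < (w.toPath.1.edges).length)]
    intro h
    have := ceinj h
    have := (w.toPath.2.edges_nodup.getElem_inj_iff).mp this
    omega
  · intro i _ hi
    have hsl : (w.toPath.1.support).length = w.toPath.1.length + 1 := Walk.length_support _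
    rw [List.getD_eq_getElem _ _ (by omega : i < (w.toPath.1.support).length),
      List.getD_eq_getElem _ _ (by omega : i + 1 < (w.toPath.1.support).length)]
    intro h
    have := cvinj h
    have := (w.toPath.2.support_nodup.getElem_inj_iff).mp this
    omega
  · intro i _ _
    exact ⟨disj _ _, disj _ _⟩


/-- Let `G` be a connected graph of order `n ≥ 3` containing a bridge, and let `b` be the
maximum number of bridges of `G` incident with a single vertex. Then `tpc G ≥ b + 1`. -/
theorem stmt_3 {V : Type*} [Fintype V] (G : SimpleGraph V)
    (hn : 3 ≤ Fintype.card V) (hG : G.Connected)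
    (hbridge : ∃ e : Sym2 V, G.IsBridge e) (b : ℕ)
    (hb : IsGreatest {m | ∃ v : V, m = {e : Sym2 V | G.IsBridge e ∧ v ∈ e}.ncard} b) :
    b + 1 ≤ tpc G := by
  classical
  have hSne := tpc_set_nonempty G hG
  have hmem := Nat.sInf_mem hSne
  obtain ⟨cv, ce, htpc⟩ := hmem
  set k := tpc G with hk
  -- b ≥ 1
  obtain ⟨e0, he0⟩ := hbridge
  have hb1 : 1 ≤ b := by
    induction e0 with
    | _ x y =>
      have hmemB : s(x, y) ∈ {e : Sym2 V | G.IsBridge e ∧ x ∈ e} :=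
        ⟨he0, Sym2.mem_mk_left x y⟩
      have hpos : 1 ≤ {e : Sym2 V | G.IsBridge e ∧ x ∈ e}.ncard :=
        (Set.ncard_pos (Set.toFinite _)).mpr ⟨_, hmemB⟩
      exact hpos.trans (hb.2 ⟨x, rfl⟩)
  rcases eq_or_lt_of_le hb1 with hb1' | hb2
  · -- b = 1 : need 2 ≤ k
    rw [← hb1']
    induction e0 with
    | _ x y =>
      have hadj : G.Adj x y := he0.reachable_iff_adj.mp (hG.preconnected x y)
      have hxy : x ≠ y := hadj.ne
      -- pick z different from x, y
      have hz : ∃ z : V, z ≠ x ∧ z ≠ y := by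
        by_contra h
        push_neg at h
        have hsub : (Finset.univ : Finset V) ⊆ {x, y} := by
          intro z _
          rcases eq_or_ne z x with h' | h'
          · simp [h']
          · simp [h z h']
        have := Finset.card_le_card hsub
        have h2 : ({x, y} : Finset V).card ≤ 2 := Finset.card_insert_le _ _ |>.trans (by simp)
        simp only [Finset.card_univ] at this
        omega
      obtain ⟨z, hzx, hzy⟩ := hz
      obtain ⟨p, hp, htp⟩ := htpc z x
      obtain ⟨q, hq, htq⟩ := htpc z y
      have hmem : s(x, y) ∈ p.edges ∨ s(x, y) ∈ q.edges := by
        by_contra h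
        push_neg at h
        have hwalk := isBridge_iff_adj_and_forall_walk_mem_edges.mp he0
          (p.reverse.append q)
        rw [Walk.edges_append, List.mem_append, Walk.edges_reverse, List.mem_reverse] at hwalk
        tauto
      have hne : ∃ a b' : Fin k, a ≠ b' := by
        rcases hmem with h | h
        · exact ⟨_, _, tpw_vertex_ne_edge hp htp hzy.symm hxy.symm h (Sym2.mem_mk_right x y)⟩
        · exact ⟨_, _, tpw_vertex_ne_edge hq htq hzx.symm hxy h (Sym2.mem_mk_left x y)⟩
      have : 1 < k := by
        rw [← Fintype.card_fin k]
        exact Fintype.one_lt_card_iff.mpr hne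
      omega
  · -- b ≥ 2
    obtain ⟨v, hv⟩ := hb.1
    set B := {e : Sym2 V | G.IsBridge e ∧ v ∈ e} with hB
    have hBfin : B.Finite := Set.toFinite _
    have hcard : 1 < B.ncard := by omega
    -- core claim
    have key : ∀ e ∈ B, ∀ e' ∈ B, e ≠ e' → ce e ≠ ce e' ∧ cv v ≠ ce e := by
      intro e heB e' he'B hne
      obtain ⟨x, hx⟩ := Sym2.mem_iff_exists.mp heB.2
      obtain ⟨y, hy⟩ := Sym2.mem_iff_exists.mp he'B.2
      have hbre : G.IsBridge s(v, x) := hx ▸ heB.1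
      have hbre' : G.IsBridge s(v, y) := hy ▸ he'B.1
      have hadjx : G.Adj v x := hbre.reachable_iff_adj.mp (hG.preconnected v x)
      have hadjy : G.Adj v y := hbre'.reachable_iff_adj.mp (hG.preconnected v y)
      have hxyne : x ≠ y := by
        intro h; apply hne; rw [hx, hy, h]
      obtain ⟨p, hp, htp⟩ := htpc x y
      have hep : s(v, x) ∈ p.edges := bridge_mem_walk hbre hxyne hadjy p
      have hep' : s(v, y) ∈ p.edges := by
        have := bridge_mem_walk hbre' hxyne.symm hadjx p.reverse
        rwa [Walk.edges_reverse, List.mem_reverse] at this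
      have hvx : v ≠ x := hadjx.ne
      have hvy : v ≠ y := hadjy.ne
      refine ⟨?_, ?_⟩
      · rw [hx, hy]
        exact tpw_edges_ne hp htp hep hep' (Sym2.mem_mk_left _ _) (Sym2.mem_mk_left _ _)
          (by rw [← hx, ← hy]; exact hne)
      · rw [hx]
        exact tpw_vertex_ne_edge hp htp hvx hvy hep (Sym2.mem_mk_left _ _)
    have key2 : ∀ e ∈ B, cv v ≠ ce e := by
      intro e heB
      obtain ⟨e', he'B, hne⟩ := Set.exists_ne_of_one_lt_ncard hcard e
      exact (key e heB e' he'B (Ne.symm hne)).2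
    have hinj : Set.InjOn ce B := by
      intro e he e' he' h
      by_contra hne
      exact (key e he e' he' hne).1 h
    have hnotmem : cv v ∉ ce '' B := by
      rintro ⟨e, heB, heq⟩
      exact key2 e heB heq.symm
    have hT : (insert (cv v) (ce '' B)).ncard = b + 1 := by
      rw [Set.ncard_insert_of_notMem hnotmem (hBfin.image _),
        Set.ncard_image_of_injOn hinj, ← hv]
    have hle : (insert (cv v) (ce '' B)).ncard ≤ k := by
      have := Set.ncard_le_ncard (Set.subset_univ (insert (cv v) (ce '' B)))
        (Set.finite_univ)
      simpa [Set.ncard_univ, Nat.card_eq_fintype_card, hk, tpc] using this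
    omega
end

section
/- If T is a tree of order n ≥ 3, then tpc(T) = Δ(T) + 1, where Δ(T) denotes the maximum degree of T. -/
open SimpleGraph

variable {V : Type*} {α : Type*}

/-- The maximum degree of a finite graph. -/
noncomputable def maxDeg {V : Type*} [Fintype V] (G : SimpleGraph V) : ℕ :=
  Finset.univ.sup fun v => (G.neighborSet v).ncard


lemma walk_support_getD {G : SimpleGraph V} {u v : V} (w : G.Walk u v) (i : ℕ) (d : V)
    (hi : i ≤ w.length) : w.support.getD i d = w.getVert i := by
  induction w generalizing i with
  | nil =>
    have : i = 0 := by simpa using hi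
    subst this; simp [SimpleGraph.Walk.getVert]
  | cons h p ih =>
    cases i with
    | zero => simp [SimpleGraph.Walk.getVert]
    | succ i =>
      rw [Walk.support_cons, List.getD_cons_succ, Walk.getVert_cons_succ]
      exact ih i (by simpa using hi)

lemma walk_edges_getD {G : SimpleGraph V} {u v : V} (w : G.Walk u v) (i : ℕ) (d : Sym2 V)
    (hi : i < w.length) : w.edges.getD i d = s(w.getVert i, w.getVert (i+1)) := by
  induction w generalizing i with
  | nil => simp at hi
  | cons h p ih =>
    cases i with
    | zero => simp [Walk.edges_cons, SimpleGraph.Walk.getVert, Walk.getVert_cons_succ]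
    | succ i =>
      rw [Walk.edges_cons, List.getD_cons_succ, Walk.getVert_cons_succ, Walk.getVert_cons_succ]
      exact ih i (by simpa using hi)

lemma path_getVert_inj {G : SimpleGraph V} {u v : V} {w : G.Walk u v} (hw : w.IsPath)
    {i j : ℕ} (hi : i ≤ w.length) (hj : j ≤ w.length) (h : w.getVert i = w.getVert j) :
    i = j := by
  have hsl := w.length_support
  have hi' : i < w.support.length := by omega
  have hj' : j < w.support.length := by omega
  have e1 : w.support[i]'hi' = w.getVert i := by
    rw [← List.getD_eq_getElem w.support u hi', walk_support_getD w i u hi]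
  have e2 : w.support[j]'hj' = w.getVert j := by
    rw [← List.getD_eq_getElem w.support u hj', walk_support_getD w j u hj]
  exact (hw.support_nodup.getElem_inj_iff).mp (by rw [e1, e2, h])

/-- Auxiliary: a coloring is "good" for `G`. -/
structure GoodC (G : SimpleGraph V) (cv : V → α) (ce : Sym2 V → α) : Prop where
  edge_inj : ∀ ⦃v a b : V⦄, G.Adj v a → G.Adj v b → a ≠ b → ce s(v, a) ≠ ce s(v, b)
  vert_edge : ∀ ⦃v a b : V⦄, G.Adj v a → G.Adj v b → a ≠ b → cv v ≠ ce s(v, a)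
  vert_vert : ∀ ⦃u v : V⦄, G.Adj u v → (∃ a, G.Adj u a ∧ a ≠ v) → (∃ b, G.Adj v b ∧ b ≠ u) →
    cv u ≠ cv v

lemma GoodC.totalProperWalk {G : SimpleGraph V} {cv : V → α} {ce : Sym2 V → α}
    (hg : GoodC G cv ce) {u v : V} {w : G.Walk u v} (hw : w.IsPath) :
    IsTotalProperWalk cv ce w := by
  have hadj : ∀ i : ℕ, i < w.length → G.Adj (w.getVert i) (w.getVert (i+1)) :=
    fun i hi => w.adj_getVert_succ hi
  have hinj : ∀ i j : ℕ, i ≤ w.length → j ≤ w.length → i ≠ j →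
      w.getVert i ≠ w.getVert j :=
    fun i j hi hj hij h => hij (path_getVert_inj hw hi hj h)
  refine ⟨?_, ?_, ?_⟩
  · intro i hi
    rw [walk_edges_getD w i _ (by omega), walk_edges_getD w (i+1) _ (by omega)]
    rw [Sym2.eq_swap (a := w.getVert i)]
    exact hg.edge_inj (hadj i (by omega)).symm (hadj (i+1) (by omega))
      (hinj i (i+2) (by omega) (by omega) (by omega))
  · intro i hi1 hi2
    obtain ⟨j, rfl⟩ : ∃ j, i = j + 1 := ⟨i - 1, by omega⟩
    rw [walk_support_getD w _ _ (by omega), walk_support_getD w _ _ (by omega)]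
    exact hg.vert_vert (hadj (j+1) (by omega))
      ⟨w.getVert j, (hadj j (by omega)).symm, hinj j (j+2) (by omega) (by omega) (by omega)⟩
      ⟨w.getVert (j+3), hadj (j+2) (by omega),
        hinj (j+3) (j+1) (by omega) (by omega) (by omega)⟩
  · intro i hi1 hi2
    obtain ⟨j, rfl⟩ : ∃ j, i = j + 1 := ⟨i - 1, by omega⟩
    rw [walk_support_getD w _ _ (by omega)]
    have hne : w.getVert j ≠ w.getVert (j+2) :=
      hinj j (j+2) (by omega) (by omega) (by omega)
    have e1 : w.edges.getD (j+1-1) s(u,u) = s(w.getVert j, w.getVert (j+1)) :=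
      walk_edges_getD w _ _ (by omega)
    have e2 : w.edges.getD (j+1) s(u,u) = s(w.getVert (j+1), w.getVert (j+2)) :=
      walk_edges_getD w _ _ (by omega)
    rw [e1, e2]
    constructor
    · rw [Sym2.eq_swap]
      exact hg.vert_edge (hadj j (by omega)).symm (hadj (j+1) (by omega)) hne
    · exact hg.vert_edge (hadj (j+1) (by omega)) (hadj j (by omega)).symm hne.symm

lemma goodC_tpconn [DecidableEq V] {G : SimpleGraph V} {cv : V → α} {ce : Sym2 V → α}
    (hg : GoodC G cv ce) (hp : G.Preconnected) : TotalProperConnected G cv ce := by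
  intro u v
  obtain ⟨w⟩ := hp u v
  exact ⟨w.toPath.1, w.toPath.2, hg.totalProperWalk w.toPath.2⟩

lemma exists_fresh {k : ℕ} (S : Finset (Fin k)) (h : S.card < k) : ∃ c, c ∉ S := by
  by_contra hc
  push_neg at hc
  have : S = Finset.univ := Finset.eq_univ_iff_forall.mpr hc
  rw [this, Finset.card_univ, Fintype.card_fin] at h
  omega

section Fin
variable [Fintype V]

lemma ncard_neighborSet_eq_degree {G : SimpleGraph V} [DecidableRel G.Adj] (v : V) :
    (G.neighborSet v).ncard = G.degree v := by
  rw [Set.ncard_eq_toFinset_card', ← SimpleGraph.neighborFinset_def]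
  rfl

lemma degree_le_maxDeg {G : SimpleGraph V} [DecidableRel G.Adj] (v : V) :
    G.degree v ≤ maxDeg G := by
  rw [← ncard_neighborSet_eq_degree]
  exact Finset.le_sup (f := fun u => (G.neighborSet u).ncard) (Finset.mem_univ v)

end Fin

section Tree
variable [Fintype V] {G : SimpleGraph V}

lemma degree_pos_of_connected [DecidableRel G.Adj] (hc : G.Preconnected)
    (h2 : 2 ≤ Fintype.card V) (v : V) : 0 < G.degree v := by
  rw [SimpleGraph.degree_pos_iff_exists_adj]
  obtain ⟨u, hu⟩ := Fintype.exists_ne_of_one_lt_card (by omega) v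
  obtain ⟨w⟩ := hc v u
  cases w with
  | nil => exact absurd rfl hu
  | cons h p => exact ⟨_, h⟩

lemma tree_sum_degrees [DecidableEq V] [DecidableRel G.Adj] (hT : G.IsTree) :
    ∑ v, G.degree v = 2 * (Fintype.card V - 1) := by
  rw [G.sum_degrees_eq_twice_card_edges, ← hT.card_edgeFinset]
  omega

lemma exists_leaf [DecidableEq V] [DecidableRel G.Adj] (hT : G.IsTree)
    (h2 : 2 ≤ Fintype.card V) : ∃ x, G.degree x = 1 := by
  by_contra hc
  push_neg at hc
  have h1 : ∀ v, 2 ≤ G.degree v := by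
    intro v
    have := degree_pos_of_connected hT.isConnected.preconnected h2 v
    have := hc v
    omega
  have := Finset.card_nsmul_le_sum Finset.univ (fun v => G.degree v) 2
    (fun v _ => h1 v)
  rw [tree_sum_degrees hT] at this
  simp only [Finset.card_univ, smul_eq_mul] at this
  omega

lemma two_le_maxDeg [DecidableEq V] [DecidableRel G.Adj] (hT : G.IsTree)
    (h3 : 3 ≤ Fintype.card V) : 2 ≤ maxDeg G := by
  by_contra hc
  push_neg at hc
  have h1 : ∀ v, G.degree v ≤ 1 := by
    intro v
    have := degree_le_maxDeg (G := G) v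
    omega
  have := Finset.sum_le_card_nsmul Finset.univ (fun v => G.degree v) 1
    (fun v _ => h1 v)
  rw [tree_sum_degrees hT] at this
  simp only [Finset.card_univ, smul_eq_mul] at this
  omega

lemma unique_nbr_of_leaf [DecidableEq V] [DecidableRel G.Adj] {x : V}
    (hx : G.degree x = 1) : ∃ y0, ∀ a, G.Adj x a ↔ a = y0 := by
  rw [← SimpleGraph.card_neighborFinset_eq_degree, Finset.card_eq_one] at hx
  obtain ⟨y0, hy0⟩ := hx
  refine ⟨y0, fun a => ?_⟩
  rw [← SimpleGraph.mem_neighborFinset, hy0, Finset.mem_singleton]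

end Tree

lemma second_nbr_of_leaf [Fintype V] {G : SimpleGraph V} (hc : G.Preconnected)
    (h3 : 3 ≤ Fintype.card V) {x y0 : V} (hx : ∀ a, G.Adj x a ↔ a = y0) :
    ∃ z, G.Adj y0 z ∧ z ≠ x := by
  classical
  by_contra hcon
  push_neg at hcon
  have key : ∀ {a b : V} (w : G.Walk a b), a = x ∨ a = y0 → b = x ∨ b = y0 := by
    intro a b w
    induction w with
    | nil => exact id
    | @cons a c b h p ih =>
      rintro (rfl | rfl)
      · exact ih (Or.inr ((hx c).mp h))
      · refine ih (Or.inl ?_)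
        by_contra hcx
        exact hcx (hcon c h)
  have hsub : (Finset.univ : Finset V) ⊆ {x, y0} := by
    intro v _
    obtain ⟨w⟩ := hc x v
    rcases key w (Or.inl rfl) with rfl | rfl <;> simp
  have := Finset.card_le_card hsub
  rw [Finset.card_univ] at this
  have := Finset.card_insert_le x ({y0} : Finset V)
  simp at *
  omega

lemma path_avoids_leaf {G : SimpleGraph V} {x y0 : V} (hx : ∀ a, G.Adj x a ↔ a = y0) :
    ∀ {a b : V} (w : G.Walk a b), w.IsPath → a ≠ x → b ≠ x → x ∉ w.support := by
  intro a b w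
  induction w with
  | nil =>
    intro _ ha _
    simp only [Walk.support_nil, List.mem_singleton]
    exact fun h => ha h.symm
  | @cons a c b h p ih =>
    intro hp ha hb
    rw [Walk.support_cons, List.mem_cons]
    rintro (rfl | hmem)
    · exact ha rfl
    · by_cases hcx : c = x
      · subst hcx
        cases p with
        | nil => exact hb rfl
        | @cons _ d _ h2 q =>
          have had : a = y0 := (hx a).mp h.symm
          have hdd : d = y0 := (hx d).mp h2
          have hmem2 : a ∈ (Walk.cons h2 q).support := by
            rw [Walk.support_cons, had, ← hdd]
            exact List.mem_cons_of_mem _ q.start_mem_support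
          rw [Walk.cons_isPath_iff] at hp
          exact hp.2 hmem2
      · exact ih hp.of_cons hcx hb hmem

lemma induce_reachable {G : SimpleGraph V} {x : V} :
    ∀ {a b : V} (w : G.Walk a b) (_ : x ∉ w.support) (ha : a ≠ x) (hb : b ≠ x),
      (G.induce {y | y ≠ x}).Reachable ⟨a, ha⟩ ⟨b, hb⟩ := by
  intro a b w
  induction w with
  | nil => intro _ ha hb; rfl
  | @cons a c b h p ih =>
    intro hW ha hb
    rw [Walk.support_cons, List.mem_cons] at hW
    push_neg at hW
    have hcx : c ≠ x := fun hc => hW.2 (hc ▸ p.start_mem_support)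
    have hadj : (G.induce {y | y ≠ x}).Adj ⟨a, ha⟩ ⟨c, hcx⟩ := by
      simp [h]
    exact hadj.reachable.trans (ih hW.2 hcx hb)

lemma induce_isTree [Fintype V] {G : SimpleGraph V} (hT : G.IsTree)
    (h3 : 3 ≤ Fintype.card V) {x y0 : V} (hx : ∀ a, G.Adj x a ↔ a = y0) :
    (G.induce {y | y ≠ x}).IsTree := by
  have hxy : G.Adj x y0 := (hx y0).mpr rfl
  constructor
  · have hne : Nonempty ({y | y ≠ x} : Set V) := ⟨⟨y0, hxy.ne'⟩⟩
    refine ⟨?_⟩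
    rintro ⟨a, ha⟩ ⟨b, hb⟩
    obtain ⟨w⟩ := hT.isConnected.preconnected a b
    classical
    have hW : x ∉ w.toPath.1.support :=
      path_avoids_leaf hx w.toPath.1 w.toPath.2 ha hb
    exact induce_reachable w.toPath.1 hW ha hb
  · intro v c hc
    have := hc.map (f := (SimpleGraph.Embedding.induce {y | y ≠ x}).toHom)
      Subtype.val_injective
    exact hT.IsAcyclic _ this

def Internal (G : SimpleGraph V) (v : V) : Prop := ∃ a b, G.Adj v a ∧ G.Adj v b ∧ a ≠ b

structure GoodAway (G : SimpleGraph V) (x : V) (cv : V → α) (ce : Sym2 V → α) : Prop where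
  edge_inj : ∀ ⦃v a b : V⦄, v ≠ x → a ≠ x → b ≠ x → G.Adj v a → G.Adj v b → a ≠ b →
    ce s(v, a) ≠ ce s(v, b)
  vert_edge : ∀ ⦃v a b : V⦄, v ≠ x → a ≠ x → b ≠ x → G.Adj v a → G.Adj v b → a ≠ b →
    cv v ≠ ce s(v, a)
  vert_vert : ∀ ⦃u v : V⦄, u ≠ x → v ≠ x → G.Adj u v → (∃ a, a ≠ x ∧ G.Adj u a ∧ a ≠ v) →
    (∃ b, b ≠ x ∧ G.Adj v b ∧ b ≠ u) → cv u ≠ cv v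

lemma extend_good {k : ℕ} {G : SimpleGraph V} {x y0 : V} (hx : ∀ a, G.Adj x a ↔ a = y0)
    {cv1 cv2 : V → Fin k} {ce1 ce2 : Sym2 V → Fin k} {cnew cy : Fin k}
    (hga : GoodAway G x cv1 ce1)
    (H1 : ∀ u, G.Adj y0 u → u ≠ x → cnew ≠ ce1 s(y0, u))
    (H2 : cy ≠ cnew)
    (H3 : ∀ u, G.Adj y0 u → u ≠ x → cy ≠ ce1 s(y0, u))
    (H4 : ∀ u, G.Adj y0 u → u ≠ x → Internal G u → cy ≠ cv1 u)
    (hcv2y : cv2 y0 = cy) (hcv2 : ∀ v, v ≠ y0 → cv2 v = cv1 v)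
    (hce2x : ∀ b, ce2 s(x, b) = cnew)
    (hce2 : ∀ a b, a ≠ x → b ≠ x → ce2 s(a, b) = ce1 s(a, b)) :
    GoodC G cv2 ce2 := by
  have hxy0 : G.Adj x y0 := (hx y0).mpr rfl
  have hy0x : y0 ≠ x := hxy0.ne'
  have hnbx : ∀ v, G.Adj v x → v = y0 := fun v h => (hx v).mp h.symm
  constructor
  · intro v a b hva hvb hab
    by_cases hvx : v = x
    · subst hvx
      exact absurd (((hx a).mp hva).trans ((hx b).mp hvb).symm) hab
    by_cases hax : a = x
    · have hvy : v = y0 := hnbx v (hax ▸ hva)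
      have hbx : b ≠ x := fun h => hab (hax.trans h.symm)
      rw [hax, hvy, show s(y0, x) = s(x, y0) from Sym2.eq_swap, hce2x y0,
        hce2 y0 b hy0x hbx]
      exact H1 b (hvy ▸ hvb) hbx
    by_cases hbx : b = x
    · have hvy : v = y0 := hnbx v (hbx ▸ hvb)
      rw [hbx, hvy, show s(y0, x) = s(x, y0) from Sym2.eq_swap, hce2x y0,
        hce2 y0 a hy0x hax]
      exact (H1 a (hvy ▸ hva) hax).symm
    · rw [hce2 v a hvx hax, hce2 v b hvx hbx]
      exact hga.edge_inj hvx hax hbx hva hvb hab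
  · intro v a b hva hvb hab
    by_cases hvx : v = x
    · subst hvx
      exact absurd (((hx a).mp hva).trans ((hx b).mp hvb).symm) hab
    by_cases hvy : v = y0
    · rw [hvy, hcv2y]
      by_cases hax : a = x
      · rw [hax, show s(y0, x) = s(x, y0) from Sym2.eq_swap, hce2x y0]
        exact H2
      · rw [hce2 y0 a hy0x hax]
        exact H3 a (hvy ▸ hva) hax
    · have hax : a ≠ x := fun h => hvy (hnbx v (h ▸ hva))
      have hbx : b ≠ x := fun h => hvy (hnbx v (h ▸ hvb))
      rw [hcv2 v hvy, hce2 v a hvx hax]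
      exact hga.vert_edge hvx hax hbx hva hvb hab
  · intro u v huv hu hv
    by_cases hux : u = x
    · subst hux
      obtain ⟨a, ha1, ha2⟩ := hu
      exact absurd (((hx a).mp ha1).trans ((hx v).mp huv).symm) ha2
    by_cases hvx : v = x
    · subst hvx
      obtain ⟨b, hb1, hb2⟩ := hv
      exact absurd (((hx b).mp hb1).trans ((hx u).mp huv.symm).symm) hb2
    by_cases huy : u = y0
    · have hvy : v ≠ y0 := fun h => G.irrefl (huy ▸ h ▸ huv)
      rw [huy, hcv2y, hcv2 v hvy]
      obtain ⟨b, hb1, hb2⟩ := hv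
      exact H4 v (huy ▸ huv) hvx ⟨b, u, hb1, huv.symm, hb2⟩
    by_cases hvy : v = y0
    · rw [hvy, hcv2y, hcv2 u huy]
      obtain ⟨a, ha1, ha2⟩ := hu
      exact (H4 u (hvy ▸ huv.symm) hux ⟨a, v, ha1, huv, ha2⟩).symm
    · rw [hcv2 u huy, hcv2 v hvy]
      obtain ⟨a, ha1, ha2⟩ := hu
      obtain ⟨b, hb1, hb2⟩ := hv
      have hax : a ≠ x := fun h => huy (hnbx u (h ▸ ha1))
      have hbx : b ≠ x := fun h => hvy (hnbx v (h ▸ hb1))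
      exact hga.vert_vert hux hvx huv ⟨a, hax, ha1, ha2⟩ ⟨b, hbx, hb1, hb2⟩

lemma exists_goodAway {k : ℕ} {G : SimpleGraph V} (x : V) (hk : 0 < k)
    (h : ∃ (cv : ({y | y ≠ x} : Set V) → Fin k) (ce : Sym2 ({y | y ≠ x} : Set V) → Fin k),
      GoodC (G.induce {y | y ≠ x}) cv ce) :
    ∃ (cv : V → Fin k) (ce : Sym2 V → Fin k), GoodAway G x cv ce := by
  classical
  obtain ⟨cvO, ceO, hg⟩ := h
  set c0 : Fin k := ⟨0, hk⟩ with hc0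
  refine ⟨fun v => if h : v ≠ x then cvO ⟨v, h⟩ else c0,
    Sym2.lift ⟨fun a b => if h : a ≠ x ∧ b ≠ x then ceO s(⟨a, h.1⟩, ⟨b, h.2⟩) else c0, ?_⟩,
    ?_, ?_, ?_⟩
  · intro a b
    dsimp only
    by_cases h : a ≠ x ∧ b ≠ x
    · rw [dif_pos h, dif_pos ⟨h.2, h.1⟩, Sym2.eq_swap]
    · rw [dif_neg h, dif_neg (fun hh => h ⟨hh.2, hh.1⟩)]
  · intro v a b hvx hax hbx hva hvb hab
    simp only [Sym2.lift_mk]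
    rw [dif_pos ⟨hvx, hax⟩, dif_pos ⟨hvx, hbx⟩]
    exact hg.edge_inj (v := ⟨v, hvx⟩) (a := ⟨a, hax⟩) (b := ⟨b, hbx⟩) hva hvb
      (fun h => hab (congrArg Subtype.val h))
  · intro v a b hvx hax hbx hva hvb hab
    simp only [Sym2.lift_mk]
    rw [dif_pos hvx, dif_pos ⟨hvx, hax⟩]
    exact hg.vert_edge (v := ⟨v, hvx⟩) (a := ⟨a, hax⟩) (b := ⟨b, hbx⟩) hva hvb
      (fun h => hab (congrArg Subtype.val h))
  · intro u v hux hvx huv hu hv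
    obtain ⟨a, hax, ha1, ha2⟩ := hu
    obtain ⟨b, hbx, hb1, hb2⟩ := hv
    show (if h : u ≠ x then cvO ⟨u, h⟩ else c0) ≠ (if h : v ≠ x then cvO ⟨v, h⟩ else c0)
    rw [dif_pos hux, dif_pos hvx]
    exact hg.vert_vert (u := ⟨u, hux⟩) (v := ⟨v, hvx⟩) huv
      ⟨⟨a, hax⟩, ha1, fun h => ha2 (congrArg Subtype.val h)⟩
      ⟨⟨b, hbx⟩, hb1, fun h => hb2 (congrArg Subtype.val h)⟩

lemma maxDeg_induce_le [Fintype V] [DecidableEq V] (G : SimpleGraph V) (x : V) :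
    maxDeg (G.induce {y | y ≠ x}) ≤ maxDeg G := by
  classical
  apply Finset.sup_le
  intro a _
  have h1 : ((G.induce {y | y ≠ x}).neighborSet a).ncard
      = (Subtype.val '' ((G.induce {y | y ≠ x}).neighborSet a)).ncard :=
    (Set.ncard_image_of_injective _ Subtype.val_injective).symm
  have h2 : (Subtype.val '' ((G.induce {y | y ≠ x}).neighborSet a)) ⊆ G.neighborSet a.1 := by
    rintro _ ⟨b, hb, rfl⟩
    exact hb
  calc ((G.induce {y | y ≠ x}).neighborSet a).ncard
      ≤ (G.neighborSet a.1).ncard := h1 ▸ Set.ncard_le_ncard h2 (Set.toFinite _)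
    _ ≤ maxDeg G := Finset.le_sup (f := fun u => (G.neighborSet u).ncard) (Finset.mem_univ _)

lemma card_ne_subtype [Fintype V] [DecidableEq V] (x : V) :
    Fintype.card ({y | y ≠ x} : Set V) = Fintype.card V - 1 := by
  classical
  rw [Fintype.card_congr (Equiv.subtypeEquivRight (q := fun y => ¬ y = x) (by simp))]
  rw [Fintype.card_subtype_compl, Fintype.card_subtype_eq]

universe u

lemma exists_goodC (n : ℕ) : ∀ {V : Type u} [Fintype V] (G : SimpleGraph V),
    Fintype.card V = n → G.IsTree → ∀ k : ℕ, 3 ≤ k → maxDeg G + 1 ≤ k →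
    ∃ (cv : V → Fin k) (ce : Sym2 V → Fin k), GoodC G cv ce := by
  induction n using Nat.strong_induction_on with
  | _ n ih =>
    intro V _ G hcard hT k hk3 hkd
    have hk0 : 0 < k := by omega
    by_cases hsmall : Fintype.card V ≤ 2
    · have h3 : ∀ a b c : V, a ≠ b → a ≠ c → b ≠ c → False := by
        intro a b c hab hac hbc
        have := Fintype.two_lt_card_iff.mpr ⟨a, b, c, hab, hac, hbc⟩
        omega
      refine ⟨fun _ => ⟨0, hk0⟩, fun _ => ⟨0, hk0⟩, ?_, ?_, ?_⟩
      · intro v a b hva hvb hab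
        exact (h3 v a b hva.ne hvb.ne hab).elim
      · intro v a b hva hvb hab
        exact (h3 v a b hva.ne hvb.ne hab).elim
      · rintro u v huv ⟨a, ha1, ha2⟩ _
        exact (h3 u v a huv.ne ha1.ne ha2.symm).elim
    · push_neg at hsmall
      classical
      have hV3 : 3 ≤ Fintype.card V := hsmall
      obtain ⟨x, hx1⟩ := exists_leaf hT (by omega)
      obtain ⟨y0, hxiff⟩ := unique_nbr_of_leaf hx1
      have hxy0 : G.Adj x y0 := (hxiff y0).mpr rfl
      have hy0x : y0 ≠ x := hxy0.ne'
      have hnbx : ∀ v, G.Adj v x → v = y0 := fun v h => (hxiff v).mp h.symm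
      have hT' := induce_isTree hT hV3 hxiff
      have hcard' : Fintype.card ({y | y ≠ x} : Set V) = n - 1 := by
        rw [card_ne_subtype, hcard]
      have hmd : maxDeg (G.induce {y | y ≠ x}) ≤ maxDeg G := maxDeg_induce_le G x
      obtain ⟨cvO, ceO, hgO⟩ := ih (n - 1) (by omega) (G.induce {y | y ≠ x}) hcard'
        hT' k hk3 (by omega)
      obtain ⟨cv1, ce1, hga⟩ := exists_goodAway x hk0 ⟨cvO, ceO, hgO⟩
      -- the set of old neighbors of y0
      set N : Finset V := (G.neighborFinset y0).erase x with hN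
      have hmemN : ∀ u, u ∈ N ↔ u ≠ x ∧ G.Adj y0 u := by
        intro u
        rw [hN, Finset.mem_erase, SimpleGraph.mem_neighborFinset]
      have hNcard : N.card = G.degree y0 - 1 := by
        rw [hN, Finset.card_erase_of_mem (by simpa using hxy0.symm : x ∈ G.neighborFinset y0)]
        rfl
      have hdegmax : G.degree y0 ≤ maxDeg G := degree_le_maxDeg y0
      obtain ⟨z, hz1, hz2⟩ := second_nbr_of_leaf hT.isConnected.preconnected hV3 hxiff
      have hzN : z ∈ N := (hmemN z).mpr ⟨hz2, hz1⟩
      have hN1 : 1 ≤ N.card := Finset.card_pos.mpr ⟨z, hzN⟩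
      -- choose cnew and cy
      have key : ∃ cnew cy : Fin k,
          (∀ u, G.Adj y0 u → u ≠ x → cnew ≠ ce1 s(y0, u)) ∧ cy ≠ cnew ∧
          (∀ u, G.Adj y0 u → u ≠ x → cy ≠ ce1 s(y0, u)) ∧
          (∀ u, G.Adj y0 u → u ≠ x → Internal G u → cy ≠ cv1 u) := by
        by_cases hA : 2 ≤ N.card
        · obtain ⟨cnew, hcnew⟩ := exists_fresh
            (insert (cv1 y0) (N.image fun u => ce1 s(y0, u)))
            (by
              have h1 := Finset.card_insert_le (cv1 y0) (N.image fun u => ce1 s(y0, u))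
              have h2 := Finset.card_image_le (s := N) (f := fun u => ce1 s(y0, u))
              have h3 : G.degree y0 ≤ k - 1 := by omega
              omega)
          simp only [Finset.mem_insert, Finset.mem_image, not_or, not_exists] at hcnew
          obtain ⟨hcnew1, hcnew2⟩ := hcnew
          refine ⟨cnew, cv1 y0, ?_, fun h => hcnew1 h.symm, ?_, ?_⟩
          · intro u hadj hux h
            exact hcnew2 u ⟨(hmemN u).mpr ⟨hux, hadj⟩, h.symm⟩
          · intro u hadj hux
            obtain ⟨b, hbN, hbu⟩ := Finset.exists_mem_ne (s := N) (by omega) u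
            obtain ⟨hbx, hbadj⟩ := (hmemN b).mp hbN
            exact hga.vert_edge hy0x hux hbx hadj hbadj hbu.symm
          · intro u hadj hux hInt
            obtain ⟨b, hbN, hbu⟩ := Finset.exists_mem_ne (s := N) (by omega) u
            obtain ⟨hbx, hbadj⟩ := (hmemN b).mp hbN
            have huy0 : u ≠ y0 := fun h => G.irrefl (h ▸ hadj)
            obtain ⟨c, d, hc, hd, hcd⟩ := hInt
            have hwit : ∃ w, G.Adj u w ∧ w ≠ y0 := by
              by_cases hcy0 : c = y0
              · exact ⟨d, hd, fun h => hcd (hcy0 ▸ h ▸ rfl)⟩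
              · exact ⟨c, hc, hcy0⟩
            obtain ⟨w, hw1, hw2⟩ := hwit
            have hwx : w ≠ x := fun h => huy0 (hnbx u (h ▸ hw1))
            exact hga.vert_vert hy0x hux hadj ⟨b, hbx, hbadj, hbu⟩ ⟨w, hwx, hw1, hw2⟩
        · -- N = {z}
          have hNz : N = {z} := by
            apply Finset.eq_singleton_iff_unique_mem.mpr
            refine ⟨hzN, fun u hu => ?_⟩
            by_contra huz
            have := Finset.one_lt_card_iff.mpr ⟨u, z, hu, hzN, huz⟩
            omega
          have honly : ∀ u, G.Adj y0 u → u ≠ x → u = z := by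
            intro u hadj hux
            have : u ∈ N := (hmemN u).mpr ⟨hux, hadj⟩
            rw [hNz] at this
            exact Finset.mem_singleton.mp this
          have hcnew : ∃ cnew : Fin k, cnew ≠ ce1 s(y0, z) ∧
              (cv1 z = ce1 s(y0, z) ∨ cv1 z = cnew) := by
            by_cases hcz : cv1 z = ce1 s(y0, z)
            · obtain ⟨c, hc⟩ := exists_fresh {ce1 s(y0, z)}
                (by rw [Finset.card_singleton]; omega)
              exact ⟨c, by simpa using hc, Or.inl hcz⟩
            · exact ⟨cv1 z, hcz, Or.inr rfl⟩
          obtain ⟨cnew, hc1, hc2⟩ := hcnew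
          obtain ⟨cy, hcy⟩ := exists_fresh {ce1 s(y0, z), cnew}
            (by
              have := Finset.card_insert_le (ce1 s(y0, z)) ({cnew} : Finset (Fin k))
              have := Finset.card_singleton cnew
              omega)
          simp only [Finset.mem_insert, Finset.mem_singleton, not_or] at hcy
          refine ⟨cnew, cy, ?_, hcy.2, ?_, ?_⟩
          · intro u hadj hux
            rw [honly u hadj hux]
            exact hc1
          · intro u hadj hux
            rw [honly u hadj hux]
            exact hcy.1
          · intro u hadj hux _
            rw [honly u hadj hux]
            rcases hc2 with h | h
            · rw [h]; exact hcy.1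
            · rw [h]; exact hcy.2
      obtain ⟨cnew, cy, H1, H2, H3, H4⟩ := key
      refine ⟨Function.update cv1 y0 cy, fun e => if x ∈ e then cnew else ce1 e, ?_⟩
      refine extend_good hxiff hga H1 H2 H3 H4 (Function.update_self y0 cy cv1)
        (fun v hv => Function.update_of_ne hv cy cv1) ?_ ?_
      · intro b
        simp
      · intro a b hax hbx
        have : x ∉ s(a, b) := by
          rw [Sym2.mem_iff]
          push_neg
          exact ⟨fun h => hax h.symm, fun h => hbx h.symm⟩
        simp [this]

lemma lower_bound {V : Type*} [Fintype V] {T : SimpleGraph V} (hT : T.IsTree)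
    (hn : 3 ≤ Fintype.card V) {k : ℕ} (cv : V → Fin k) (ce : Sym2 V → Fin k)
    (h : TotalProperConnected T cv ce) : maxDeg T + 1 ≤ k := by
  classical
  have hne : Nonempty V := Fintype.card_pos_iff.mp (by omega)
  obtain ⟨v, -, hv⟩ := Finset.exists_mem_eq_sup (Finset.univ : Finset V)
    Finset.univ_nonempty (fun u => (T.neighborSet u).ncard)
  have hvdeg : maxDeg T = T.degree v := by
    rw [← ncard_neighborSet_eq_degree]
    exact hv
  have hΔ2 : 2 ≤ T.degree v := hvdeg ▸ two_le_maxDeg hT hn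
  have key : ∀ u w, T.Adj v u → T.Adj v w → u ≠ w →
      ce s(v, u) ≠ ce s(v, w) ∧ cv v ≠ ce s(v, u) := by
    intro u w hu hw huw
    obtain ⟨p, hp, htp⟩ := h u w
    have hw0 : (Walk.cons hu.symm (Walk.cons hw Walk.nil) : T.Walk u w).IsPath := by
      simp [Walk.cons_isPath_iff, hu.ne', huw, hw.ne]
    have hpe : p = Walk.cons hu.symm (Walk.cons hw Walk.nil) :=
      (hT.existsUnique_path u w).unique hp hw0
    rw [hpe] at htp
    obtain ⟨h1, -, h3⟩ := htp
    have e1 := h1 0 (by simp)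
    have e3 := (h3 1 le_rfl (by simp)).1
    simp only [Walk.edges_cons, Walk.edges_nil, Walk.support_cons, Walk.support_nil,
      List.getD_cons_zero, List.getD_cons_succ, Nat.sub_self] at e1 e3
    constructor
    · rw [show s(v, u) = s(u, v) from Sym2.eq_swap]
      exact e1
    · rw [show s(v, u) = s(u, v) from Sym2.eq_swap]
      exact e3
  set S : Finset (Fin k) :=
    insert (cv v) ((T.neighborFinset v).image fun u => ce s(v, u)) with hS
  have himg : ((T.neighborFinset v).image fun u => ce s(v, u)).card = T.degree v := by
    rw [Finset.card_image_of_injOn, SimpleGraph.card_neighborFinset_eq_degree]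
    intro a ha b hb hab
    by_contra hne2
    exact (key a b ((SimpleGraph.mem_neighborFinset T v a).mp ha)
      ((SimpleGraph.mem_neighborFinset T v b).mp hb) hne2).1 hab
  have hnotin : cv v ∉ (T.neighborFinset v).image fun u => ce s(v, u) := by
    rw [Finset.mem_image]
    rintro ⟨u, hu, huv⟩
    obtain ⟨w, hwmem, hwu⟩ := Finset.exists_mem_ne
      (s := T.neighborFinset v) (by rw [SimpleGraph.card_neighborFinset_eq_degree]; omega) u
    exact (key u w ((SimpleGraph.mem_neighborFinset T v u).mp hu)
      ((SimpleGraph.mem_neighborFinset T v w).mp hwmem) hwu.symm).2 huv.symm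
  have hcard : S.card = T.degree v + 1 := by
    rw [hS, Finset.card_insert_of_notMem hnotin, himg]
  have := Finset.card_le_univ S
  rw [hcard, Fintype.card_fin] at this
  omega

/-- If `T` is a tree of order `n ≥ 3`, then `tpc T = Δ(T) + 1`. -/
theorem stmt_4 {V : Type*} [Fintype V] (T : SimpleGraph V)
    (hn : 3 ≤ Fintype.card V) (hT : T.IsTree) :
    tpc T = maxDeg T + 1 := by
  classical
  have hΔ2 : 2 ≤ maxDeg T := two_le_maxDeg hT hn
  obtain ⟨cv, ce, hg⟩ := exists_goodC (Fintype.card V) T rfl hT (maxDeg T + 1)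
    (by omega) le_rfl
  have hmem : maxDeg T + 1 ∈
      {k | ∃ (cv : V → Fin k) (ce : Sym2 V → Fin k), TotalProperConnected T cv ce} :=
    ⟨cv, ce, goodC_tpconn hg hT.isConnected.preconnected⟩
  refine le_antisymm (Nat.sInf_le hmem) (le_csInf ⟨_, hmem⟩ ?_)
  rintro k ⟨cv', ce', h'⟩
  exact lower_bound hT hn cv' ce' h'
end

section
/- For every nontrivial connected graph G, tpc(G) ≤ min{Δ(T) + 1 : T is a spanning tree of G}, where Δ(T) denotes the maximum degree of T. -/
open SimpleGraph

variable {V : Type*} {α : Type*}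

namespace TPCaux
open SimpleGraph Walk
open scoped Classical
open Fin.NatCast

variable {V : Type*}

lemma support_getD {G : SimpleGraph V} {u v : V} (w : G.Walk u v) (x : V) :
    ∀ i, i ≤ w.length → w.support.getD i x = w.getVert i := by
  induction w with
  | nil =>
    intro i hi
    have : i = 0 := by simpa using hi
    subst this
    simp [Walk.getVert]
  | @cons a b c h p ih =>
    intro i hi
    cases i with
    | zero => simp
    | succ n =>
      rw [Walk.support_cons, List.getD_cons_succ, Walk.getVert_cons_succ]
      exact ih n (by simpa using hi)

lemma edges_getD {G : SimpleGraph V} {u v : V} (w : G.Walk u v) (x : Sym2 V) :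
    ∀ i, i < w.length → w.edges.getD i x = s(w.getVert i, w.getVert (i + 1)) := by
  induction w with
  | nil => intro i hi; simp at hi
  | @cons a b c h p ih =>
    intro i hi
    cases i with
    | zero => simp [Walk.getVert_cons_succ]
    | succ n =>
      rw [Walk.edges_cons, List.getD_cons_succ, Walk.getVert_cons_succ,
        Walk.getVert_cons_succ]
      exact ih n (by simpa using hi)

lemma getVert_inj' {G : SimpleGraph V} {u v : V} {w : G.Walk u v} (hw : w.IsPath)
    {i j : ℕ} (hi : i ≤ w.length) (hj : j ≤ w.length) (h : w.getVert i = w.getVert j) :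
    i = j := by
  have h1 := support_getD w u i hi
  have h2 := support_getD w u j hj
  have hi' : i < w.support.length := by rw [w.length_support]; omega
  have hj' : j < w.support.length := by rw [w.length_support]; omega
  have hg : w.support[i] = w.support[j] := by
    rw [← List.getD_eq_getElem w.support u hi', ← List.getD_eq_getElem w.support u hj',
      h1, h2]
    exact h
  exact (hw.support_nodup.getElem_inj_iff).mp hg


variable (T : SimpleGraph V) (r : V) (hT : T.IsTree)

noncomputable def pth (v : V) : T.Walk v r := (hT.existsUnique_path v r).choose

lemma pth_isPath (v : V) : (pth T r hT v).IsPath := (hT.existsUnique_path v r).choose_spec.1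

lemma pth_eq {v : V} (p : T.Walk v r) (hp : p.IsPath) : p = pth T r hT v :=
  (hT.existsUnique_path v r).choose_spec.2 p hp

noncomputable def dpt (v : V) : ℕ := (pth T r hT v).length

noncomputable def par (v : V) : V := (pth T r hT v).getVert 1

lemma pth_r : pth T r hT r = Walk.nil := (pth_eq T r hT Walk.nil Walk.IsPath.nil).symm

lemma par_r : par T r hT r = r := by unfold par; rw [pth_r]; rfl

lemma par_spec {v : V} (hv : v ≠ r) :
    T.Adj v (par T r hT v) ∧ dpt T r hT v = dpt T r hT (par T r hT v) + 1 := by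
  obtain ⟨w, hadj, q, hq⟩ :=
    (Walk.not_nil_iff).mp (Walk.not_nil_of_ne hv (p := pth T r hT v))
  have hqp : q.IsPath := by
    have := pth_isPath T r hT v
    rw [hq] at this
    exact this.of_cons
  have hqe : q = pth T r hT w := pth_eq T r hT q hqp
  have hpar : par T r hT v = w := by
    unfold par; rw [hq, Walk.getVert_cons_succ, Walk.getVert_zero]
  rw [hpar]
  refine ⟨hadj, ?_⟩
  unfold dpt
  rw [hq, ← hqe]
  simp

lemma adj_cases {a b : V} (hab : T.Adj a b) :
    (par T r hT b = a ∧ dpt T r hT b = dpt T r hT a + 1) ∨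
    (par T r hT a = b ∧ dpt T r hT a = dpt T r hT b + 1) := by
  by_cases hmem : b ∈ (pth T r hT a).support
  · right
    have htk : (pth T r hT a).takeUntil b hmem = Walk.cons hab Walk.nil := by
      have h1 : ((pth T r hT a).takeUntil b hmem).IsPath :=
        (pth_isPath T r hT a).takeUntil hmem
      have h2 : (Walk.cons hab (Walk.nil : T.Walk b b)).IsPath := by
        simp [Walk.cons_isPath_iff, hab.ne]
      have := hT.IsAcyclic.path_unique ⟨_, h1⟩ ⟨_, h2⟩
      exact congrArg Subtype.val this
    have hsp := (pth T r hT a).take_spec hmem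
    rw [htk] at hsp
    simp only [Walk.cons_append, Walk.nil_append] at hsp
    have hdrop : (pth T r hT a).dropUntil b hmem = pth T r hT b :=
      pth_eq T r hT _ ((pth_isPath T r hT a).dropUntil hmem)
    constructor
    · unfold par
      rw [← hsp, Walk.getVert_cons_succ, Walk.getVert_zero]
    · unfold dpt
      rw [← hsp, hdrop]
      simp
  · left
    have hW : (Walk.cons hab.symm (pth T r hT a)).IsPath :=
      (pth_isPath T r hT a).cons hmem
    have heq := pth_eq T r hT _ hW
    constructor
    · unfold par
      rw [← heq, Walk.getVert_cons_succ, Walk.getVert_zero]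
    · unfold dpt
      rw [← heq]
      simp

lemma ne_r_of_par {a b : V} (hab : T.Adj a b) (h : par T r hT b = a) : b ≠ r := by
  intro hb
  subst hb
  rw [par_r] at h
  exact hab.ne h.symm


section Fin

lemma cast_ne {K m m' : ℕ} (hm : m < K + 1) (hm' : m' < K + 1) (h : m ≠ m') :
    (m : Fin (K + 1)) ≠ (m' : Fin (K + 1)) := by
  intro hc
  apply h
  have := congrArg Fin.val hc
  rwa [Fin.val_natCast, Fin.val_natCast, Nat.mod_eq_of_lt hm, Nat.mod_eq_of_lt hm'] at this

lemma add_cast_ne {K : ℕ} (x : Fin (K + 1)) {m m' : ℕ} (hm : m < K + 1) (hm' : m' < K + 1)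
    (h : m ≠ m') : x + (m : Fin (K + 1)) ≠ x + (m' : Fin (K + 1)) :=
  fun hc => cast_ne hm hm' h (add_left_cancel hc)

lemma self_ne_add {K : ℕ} (x : Fin (K + 1)) {m : ℕ} (hm0 : m ≠ 0) (hm : m < K + 1) :
    x ≠ x + (m : Fin (K + 1)) := by
  have h := add_cast_ne x (by omega : (0:ℕ) < K + 1) hm (by omega)
  simpa using h

end Fin

section Kids

variable [Fintype V]

noncomputable def kids (p : V) : Finset V :=
  Finset.univ.filter fun u => T.Adj p u ∧ par T r hT u = p

lemma mem_kids {v : V} (hv : v ≠ r) : v ∈ kids T r hT (par T r hT v) := by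
  simp only [kids, Finset.mem_filter, Finset.mem_univ, true_and]
  exact ⟨(par_spec T r hT hv).1.symm, trivial⟩

noncomputable def hfun (v : V) : ℕ :=
  if h : v ∈ kids T r hT (par T r hT v) then
    ((Fintype.equivFin (kids T r hT (par T r hT v))) ⟨v, h⟩).val
  else 0

lemma hfun_lt {v : V} (hv : v ≠ r) :
    hfun T r hT v < (kids T r hT (par T r hT v)).card := by
  unfold hfun
  rw [dif_pos (mem_kids T r hT hv)]
  have := ((Fintype.equivFin (kids T r hT (par T r hT v))) ⟨v, mem_kids T r hT hv⟩).isLt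
  simpa [Fintype.card_coe] using this

lemma hfun_inj {u u' : V} (hu : u ≠ r) (hu' : u' ≠ r)
    (hp : par T r hT u = par T r hT u') (hne : u ≠ u') :
    hfun T r hT u ≠ hfun T r hT u' := by
  unfold hfun
  rw [← hp]
  rw [dif_pos (mem_kids T r hT hu), dif_pos (hp ▸ mem_kids T r hT hu')]
  intro hc
  apply hne
  have h1 := Fin.val_injective hc
  have h2 := (Fintype.equivFin (kids T r hT (par T r hT u))).injective h1
  exact congrArg Subtype.val h2

lemma kids_card_le (K : ℕ) (hdeg : ∀ v, T.degree v ≤ K) (hr1 : T.degree r ≤ 1)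
    (hK : 2 ≤ K) (p : V) : (kids T r hT p).card ≤ K - 1 := by
  have hsub : kids T r hT p ⊆ T.neighborFinset p := by
    intro u hu
    simp only [kids, Finset.mem_filter] at hu
    rw [SimpleGraph.mem_neighborFinset]
    exact hu.2.1
  by_cases hp : p = r
  · rw [hp] at hsub ⊢
    have h1 : (kids T r hT r).card ≤ T.degree r := Finset.card_le_card hsub
    omega
  · have hmem : par T r hT p ∈ T.neighborFinset p := by
      rw [SimpleGraph.mem_neighborFinset]
      exact (par_spec T r hT hp).1
    have hnot : par T r hT p ∉ kids T r hT p := by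
      intro hk
      simp only [kids, Finset.mem_filter] at hk
      have hpp : par T r hT (par T r hT p) = p := hk.2.2
      have hne : par T r hT p ≠ r := by
        intro h
        rw [h, par_r] at hpp
        exact hp hpp.symm
      have e1 := (par_spec T r hT hp).2
      have e2 := (par_spec T r hT hne).2
      rw [hpp] at e2
      omega
    have hss : kids T r hT p ⊆ (T.neighborFinset p).erase (par T r hT p) :=
      Finset.subset_erase.mpr ⟨hsub, hnot⟩
    have hcard := Finset.card_le_card hss
    rw [Finset.card_erase_of_mem hmem] at hcard
    have := hdeg p
    have hd : (T.neighborFinset p).card = T.degree p := rfl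
    omega

end Kids

section Coloring

variable [Fintype V]

noncomputable def F (K : ℕ) : ℕ → V → Fin (K + 1)
  | 0, _ => 0
  | n + 1, v =>
    if v = r then 0
    else F K n (par T r hT v) + ((2 + hfun T r hT v : ℕ) : Fin (K + 1))

noncomputable def fcol (K : ℕ) (v : V) : Fin (K + 1) := F T r hT K (dpt T r hT v) v

lemma fcol_eq (K : ℕ) {v : V} (hv : v ≠ r) :
    fcol T r hT K v
      = fcol T r hT K (par T r hT v) + ((2 + hfun T r hT v : ℕ) : Fin (K + 1)) := by
  unfold fcol
  rw [(par_spec T r hT hv).2]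
  simp only [F]
  rw [if_neg hv]

noncomputable def cvc (K : ℕ) (v : V) : Fin (K + 1) := fcol T r hT K v + 1

noncomputable def cec (K : ℕ) : Sym2 V → Fin (K + 1) :=
  Sym2.lift ⟨fun a b =>
    if dpt T r hT a < dpt T r hT b then fcol T r hT K b
    else if dpt T r hT b < dpt T r hT a then fcol T r hT K a
    else 0, by
      intro a b
      dsimp only
      rcases lt_trichotomy (dpt T r hT a) (dpt T r hT b) with h | h | h
      · rw [if_pos h, if_neg (by omega), if_pos h]
      · rw [if_neg (by omega), if_neg (by omega), if_neg (by omega), if_neg (by omega)]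
      · rw [if_neg (by omega), if_pos h, if_pos h]⟩

lemma cec_eq (K : ℕ) {a b : V} (hab : T.Adj a b) (hpar : par T r hT b = a) :
    cec T r hT K s(a, b) = fcol T r hT K b := by
  have hbr : b ≠ r := ne_r_of_par T r hT hab hpar
  have hd : dpt T r hT b = dpt T r hT a + 1 := by
    have := (par_spec T r hT hbr).2
    rwa [hpar] at this
  unfold cec
  rw [Sym2.lift_mk]
  dsimp only
  rw [if_pos (by omega)]

lemma edge_color (K : ℕ) {a b : V} (hab : T.Adj a b) :
    (par T r hT b = a ∧ b ≠ r ∧ cec T r hT K s(a, b) = fcol T r hT K b ∧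
        fcol T r hT K b = fcol T r hT K a + ((2 + hfun T r hT b : ℕ) : Fin (K + 1))) ∨
    (par T r hT a = b ∧ a ≠ r ∧ cec T r hT K s(a, b) = fcol T r hT K a ∧
        fcol T r hT K a = fcol T r hT K b + ((2 + hfun T r hT a : ℕ) : Fin (K + 1))) := by
  rcases adj_cases T r hT hab with ⟨h1, _⟩ | ⟨h1, _⟩
  · left
    have hbr := ne_r_of_par T r hT hab h1
    refine ⟨h1, hbr, cec_eq T r hT K hab h1, ?_⟩
    rw [fcol_eq T r hT K hbr, h1]
  · right
    have har := ne_r_of_par T r hT hab.symm h1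
    have hc : cec T r hT K s(a, b) = fcol T r hT K a := by
      rw [Sym2.eq_swap]
      exact cec_eq T r hT K hab.symm h1
    refine ⟨h1, har, hc, ?_⟩
    rw [fcol_eq T r hT K har, h1]

end Coloring


section Main

variable [Fintype V]

/-- dummy anchor -/
lemma one_lt_succ (K : ℕ) (hK : 2 ≤ K) : (1 : ℕ) < K + 1 := by omega

lemma walk_good (K : ℕ) (hdeg : ∀ v, T.degree v ≤ K) (hr1 : T.degree r ≤ 1) (hK : 2 ≤ K)
    {u v : V} (w : T.Walk u v) (hw : w.IsPath) :
    IsTotalProperWalk (cvc T r hT K) (cec T r hT K) w := by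
  have hbound : ∀ x : V, x ≠ r → 2 + hfun T r hT x ≤ K := by
    intro x hx
    have h1 := hfun_lt T r hT hx
    have h2 := kids_card_le T r hT K hdeg hr1 hK (par T r hT x)
    omega
  refine ⟨?_, ?_, ?_⟩
  · -- adjacent edges differ
    intro i hi
    have hi1 : i < w.length := by omega
    rw [edges_getD w _ i hi1, edges_getD w _ (i + 1) hi]
    have hab : T.Adj (w.getVert i) (w.getVert (i + 1)) := w.adj_getVert_succ hi1
    have hbc : T.Adj (w.getVert (i + 1)) (w.getVert (i + 1 + 1)) := w.adj_getVert_succ hi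
    have hac : w.getVert i ≠ w.getVert (i + 1 + 1) := by
      intro h
      have := getVert_inj' hw (by omega) (by omega) h
      omega
    rcases edge_color T r hT K hab with ⟨hp1, hbr, he1, hf1⟩ | ⟨hp1, har, he1, hf1⟩ <;>
      rcases edge_color T r hT K hbc with ⟨hp2, hcr, he2, hf2⟩ | ⟨hp2, hbr2, he2, hf2⟩
    · rw [he1, he2, hf2]
      exact self_ne_add _ (by omega) (by have := hbound _ hcr; omega)
    · exact absurd (hp1.symm.trans hp2) hac
    · rw [he1, he2, hf1, hf2]
      refine add_cast_ne _ (by have := hbound _ har; omega) (by have := hbound _ hcr; omega) ?_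
      have := hfun_inj T r hT har hcr (hp1.trans hp2.symm) hac
      omega
    · rw [he1, he2, hf1]
      exact Ne.symm (self_ne_add _ (by omega) (by have := hbound _ har; omega))
  · -- adjacent internal vertices differ
    intro i h1 h2
    rw [support_getD w _ i (by omega), support_getD w _ (i + 1) (by omega)]
    have hab : T.Adj (w.getVert i) (w.getVert (i + 1)) := w.adj_getVert_succ (by omega)
    suffices hne : fcol T r hT K (w.getVert i) ≠ fcol T r hT K (w.getVert (i + 1)) by
      unfold cvc
      exact fun hc => hne (add_right_cancel hc)
    rcases edge_color T r hT K hab with ⟨_, hbr, _, hf⟩ | ⟨_, har, _, hf⟩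
    · rw [hf]
      exact self_ne_add _ (by omega) (by have := hbound _ hbr; omega)
    · rw [hf]
      exact Ne.symm (self_ne_add _ (by omega) (by have := hbound _ har; omega))
  · -- internal vertex differs from incident edges
    intro i h1 h2
    obtain ⟨j, rfl⟩ : ∃ j, i = j + 1 := ⟨i - 1, by omega⟩
    rw [support_getD w _ (j + 1) (by omega)]
    have hj : j + 1 - 1 = j := by omega
    rw [hj, edges_getD w _ j (by omega), edges_getD w _ (j + 1) h2]
    have hone : (1 : Fin (K + 1)) = ((1 : ℕ) : Fin (K + 1)) := by simp
    constructor
    · have hab : T.Adj (w.getVert j) (w.getVert (j + 1)) := w.adj_getVert_succ (by omega)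
      rcases edge_color T r hT K hab with ⟨_, hbr, he, hf⟩ | ⟨_, har, he, hf⟩
      · rw [he]
        unfold cvc
        rw [hone]
        exact Ne.symm (Ne.symm (by
          refine fun hc => ?_
          have : fcol T r hT K (w.getVert (j + 1)) + ((1 : ℕ) : Fin (K + 1))
              = fcol T r hT K (w.getVert (j + 1)) + ((0 : ℕ) : Fin (K + 1)) := by
            simpa using hc
          exact (add_cast_ne _ (by omega) (by omega) (by omega)) this))
      · rw [he, hf]
        unfold cvc
        rw [hone]
        exact add_cast_ne _ (by omega) (by have := hbound _ har; omega) (by omega)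
    · have hbc : T.Adj (w.getVert (j + 1)) (w.getVert (j + 1 + 1)) := w.adj_getVert_succ h2
      rcases edge_color T r hT K hbc with ⟨_, hcr, he, hf⟩ | ⟨_, hbr, he, hf⟩
      · rw [he, hf]
        unfold cvc
        rw [hone]
        exact add_cast_ne _ (by omega) (by have := hbound _ hcr; omega) (by omega)
      · rw [he]
        unfold cvc
        rw [hone]
        refine fun hc => ?_
        have : fcol T r hT K (w.getVert (j + 1)) + ((1 : ℕ) : Fin (K + 1))
            = fcol T r hT K (w.getVert (j + 1)) + ((0 : ℕ) : Fin (K + 1)) := by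
          simpa using hc
        exact (add_cast_ne _ (by omega) (by omega) (by omega)) this

end Main

end TPCaux


/-- For every nontrivial connected graph `G`,
`tpc G ≤ min {Δ(T) + 1 : T a spanning tree of G}`. -/
theorem stmt_5 {V : Type*} [Fintype V] (G : SimpleGraph V)
    (hG : G.Connected) (hV : Nontrivial V) :
    ∀ T : SimpleGraph V, T ≤ G → T.IsTree → tpc G ≤ maxDeg T + 1 := by
  intro T hTG hT
  classical
  set K := maxDeg T with hKdef
  have hdeg' : ∀ v : V, (T.neighborSet v).ncard ≤ K := by
    intro v
    rw [hKdef]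
    unfold maxDeg
    exact Finset.le_sup (f := fun v => (T.neighborSet v).ncard) (Finset.mem_univ v)
  have hdeg : ∀ v : V, T.degree v ≤ K := by
    intro v
    have h1 : (T.neighborSet v).ncard = T.degree v := by
      rw [← SimpleGraph.card_neighborSet_eq_degree, Set.ncard_eq_toFinset_card',
        Set.toFinset_card]
    rw [← h1]
    exact hdeg' v
  suffices h : ∃ (cv : V → Fin (K + 1)) (ce : Sym2 V → Fin (K + 1)),
      TotalProperConnected G cv ce by
    exact Nat.sInf_le h
  by_cases hK : 2 ≤ K
  · -- main construction
    obtain ⟨r, hr1⟩ : ∃ r : V, T.degree r ≤ 1 := by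
      by_contra hcon
      push_neg at hcon
      have hsum : ∑ v, T.degree v = 2 * T.edgeFinset.card :=
        T.sum_degrees_eq_twice_card_edges
      have hcardE : T.edgeFinset.card + 1 = Fintype.card V := hT.card_edgeFinset
      have hge : Finset.univ.card • 2 ≤ ∑ v, T.degree v :=
        Finset.card_nsmul_le_sum Finset.univ _ 2 (fun v _ => hcon v)
      rw [Finset.card_univ, smul_eq_mul] at hge
      have hpos : 1 ≤ Fintype.card V := Fintype.card_pos_iff.mpr ⟨hV.1.choose⟩
      omega
    refine ⟨TPCaux.cvc T r hT K, TPCaux.cec T r hT K, ?_⟩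
    intro x y
    obtain ⟨p, hp, -⟩ := hT.existsUnique_path x y
    have hedges : ∀ e ∈ p.edges, e ∈ G.edgeSet :=
      fun e he => SimpleGraph.edgeSet_mono hTG (p.edges_subset_edgeSet he)
    refine ⟨p.transfer G hedges, hp.transfer hedges, ?_⟩
    have hmain := TPCaux.walk_good T r hT K hdeg hr1 hK p hp
    unfold IsTotalProperWalk at hmain ⊢
    rwa [SimpleGraph.Walk.length_transfer, SimpleGraph.Walk.edges_transfer,
      SimpleGraph.Walk.support_transfer]
  · -- at most 1 color needed structurally: all paths have length ≤ 1
    push_neg at hK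
    refine ⟨fun _ => 0, fun _ => 0, ?_⟩
    intro x y
    obtain ⟨p, hp, -⟩ := hT.existsUnique_path x y
    have hlen : p.length ≤ 1 := by
      by_contra hcon
      push_neg at hcon
      have h1 : T.Adj (p.getVert 1) (p.getVert 0) := (p.adj_getVert_succ (by omega)).symm
      have h2 : T.Adj (p.getVert 1) (p.getVert 2) := p.adj_getVert_succ (by omega)
      have hne : p.getVert 0 ≠ p.getVert 2 := by
        intro h
        have := TPCaux.getVert_inj' hp (by omega) (by omega) h
        omega
      have hsub : 1 < (T.neighborSet (p.getVert 1)).ncard :=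
        (Set.one_lt_ncard (Set.toFinite _)).mpr
          ⟨_, h1, _, h2, hne⟩
      have := hdeg' (p.getVert 1)
      omega
    have hedges : ∀ e ∈ p.edges, e ∈ G.edgeSet :=
      fun e he => SimpleGraph.edgeSet_mono hTG (p.edges_subset_edgeSet he)
    refine ⟨p.transfer G hedges, hp.transfer hedges, ?_⟩
    unfold IsTotalProperWalk
    rw [SimpleGraph.Walk.length_transfer]
    exact ⟨fun i hi => absurd hi (by omega), fun i h1 h2 => absurd h2 (by omega),
      fun i h1 h2 => absurd h2 (by omega)⟩
end

section
/- If G is a traceable graph (a graph containing a Hamiltonian path) that is not complete, then tpc(G) = 3. -/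
open SimpleGraph

variable {V : Type*} {α : Type*}

lemma edges_getD_aux {G : SimpleGraph V} {u v : V} (q : G.Walk u v) :
    ∀ (k : ℕ), k < q.length → ∀ (d : V) (de : Sym2 V),
      q.edges.getD k de = s(q.support.getD k d, q.support.getD (k+1) d) := by
  induction q with
  | nil => intro k hk; simp at hk
  | @cons a b c h q ih =>
    intro k hk d de
    cases k with
    | zero =>
      simp only [Walk.edges_cons, Walk.support_cons, List.getD_cons_zero,
        List.getD_cons_succ]
      rw [q.support_eq_cons]
      simp
    | succ k =>
      simp only [Walk.edges_cons, Walk.support_cons, List.getD_cons_succ]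
      exact ih k (by simpa using hk) d de

lemma exists_seg_up {G : SimpleGraph V} {L : List V} (hch : L.Chain' G.Adj) :
    ∀ (n i j : ℕ), j - i = n → (hij : i ≤ j) → (hj : j < L.length) →
    ∃ q : G.Walk (L[i]'(lt_of_le_of_lt hij hj)) (L[j]'hj),
      q.length = j - i ∧ ∀ (k : ℕ) (d : V), k ≤ j - i → q.support.getD k d = L.getD (i + k) d := by
  intro n
  induction n with
  | zero =>
    intro i j hn hij hj
    have hji : i = j := by omega
    subst hji
    refine ⟨Walk.nil, by simp, ?_⟩
    intro k d hk
    have hk0 : k = 0 := by omega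
    subst hk0
    simp only [Walk.support_nil, List.getD_cons_zero]
    exact (List.getD_eq_getElem _ _ (by omega)).symm
  | succ n ih =>
    intro i j hn hij hj
    have hij' : i + 1 ≤ j := by omega
    have hi1 : i < L.length - 1 := by omega
    have hadj : G.Adj (L[i]'(by omega)) (L[i+1]'(by omega)) := by
      have := List.isChain_iff_getElem.mp hch i (by omega)
      simpa using this
    obtain ⟨q, hlen, hsup⟩ := ih (i+1) j (by omega) hij' hj
    refine ⟨Walk.cons hadj q, by simp [hlen]; omega, ?_⟩
    intro k d hk
    cases k with
    | zero =>
      simp only [Walk.support_cons, List.getD_cons_zero]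
      exact (List.getD_eq_getElem _ _ (by omega)).symm
    | succ k =>
      simp only [Walk.support_cons, List.getD_cons_succ]
      rw [hsup k d (by omega)]
      congr 1
      omega

lemma exists_seg_down {G : SimpleGraph V} {L : List V} (hch : L.Chain' G.Adj) :
    ∀ (n i j : ℕ), j - i = n → (hij : i ≤ j) → (hj : j < L.length) →
    ∃ q : G.Walk (L[j]'hj) (L[i]'(lt_of_le_of_lt hij hj)),
      q.length = j - i ∧ ∀ (k : ℕ) (d : V), k ≤ j - i → q.support.getD k d = L.getD (j - k) d := by
  intro n
  induction n with
  | zero =>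
    intro i j hn hij hj
    have hji : i = j := by omega
    subst hji
    refine ⟨Walk.nil, by simp, ?_⟩
    intro k d hk
    have hk0 : k = 0 := by omega
    subst hk0
    simp only [Walk.support_nil, List.getD_cons_zero]
    exact (List.getD_eq_getElem _ _ (by omega)).symm
  | succ n ih =>
    intro i j hn hij hj
    have hij' : i ≤ j - 1 := by omega
    have hj1 : j - 1 < L.length - 1 := by omega
    have hadj : G.Adj (L[j]'hj) (L[j-1]'(by omega)) := by
      have := List.isChain_iff_getElem.mp hch (j-1) (by omega)
      have h2 : j - 1 + 1 = j := by omega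
      exact (by simpa [h2] using this : G.Adj (L[j-1]'(by omega)) (L[j]'hj)).symm
    obtain ⟨q, hlen, hsup⟩ := ih i (j-1) (by omega) hij' (by omega)
    refine ⟨Walk.cons hadj q, by simp [hlen]; omega, ?_⟩
    intro k d hk
    cases k with
    | zero =>
      simp only [Walk.support_cons, List.getD_cons_zero]
      exact (List.getD_eq_getElem _ _ (by omega)).symm
    | succ k =>
      simp only [Walk.support_cons, List.getD_cons_succ]
      rw [hsup k d (by omega)]
      congr 1
      omega

lemma three_mem {V : Type*} [DecidableEq V] (G : SimpleGraph V) {a b : V}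
    (p : G.Walk a b) (hp : p.IsPath) (hall : ∀ x : V, x ∈ p.support) :
    ∃ (cv : V → Fin 3) (ce : Sym2 V → Fin 3), TotalProperConnected G cv ce := by
  set L := p.support with hLdef
  have hnd : L.Nodup := hp.support_nodup
  have hch : L.Chain' G.Adj := p.isChain_adj_support
  set idx : V → ℕ := fun v => L.idxOf v with hidxdef
  have hidxlt : ∀ v : V, idx v < L.length := fun v => List.idxOf_lt_length_iff.mpr (hall v)
  have hgetidx : ∀ (v : V), L[idx v]'(hidxlt v) = v := fun v => List.getElem_idxOf (hidxlt v)
  have hidxget : ∀ (i : ℕ) (h : i < L.length), idx (L[i]'h) = i := fun i h =>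
    hnd.idxOf_getElem i h
  refine ⟨fun v => ⟨idx v % 3, Nat.mod_lt _ (by norm_num)⟩,
    Sym2.lift ⟨fun x y => ⟨(min (idx x) (idx y) + 2) % 3, Nat.mod_lt _ (by norm_num)⟩,
      fun x y => by simp [min_comm]⟩, ?_⟩
  intro u v
  rcases le_total (idx u) (idx v) with hle | hle
  · obtain ⟨q, hlen, hsup⟩ := exists_seg_up hch (idx v - idx u) (idx u) (idx v) rfl hle (hidxlt v)
    set w : G.Walk u v := q.copy (hgetidx u) (hgetidx v) with hwdef
    have hwlen : w.length = idx v - idx u := by rw [hwdef, Walk.length_copy]; exact hlen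
    have hwsup : ∀ (k : ℕ) (d : V), k ≤ idx v - idx u →
        w.support.getD k d = L.getD (idx u + k) d := by
      intro k d hk
      rw [hwdef, Walk.support_copy]
      exact hsup k d hk
    have hidxsup : ∀ (k : ℕ) (d : V), k ≤ idx v - idx u →
        idx (w.support.getD k d) = idx u + k := by
      intro k d hk
      rw [hwsup k d hk, List.getD_eq_getElem _ _ (by have := hidxlt v; omega), hidxget]
    have hce : ∀ (k : ℕ), k < idx v - idx u →
        (Sym2.lift ⟨fun x y => (⟨(min (idx x) (idx y) + 2) % 3, Nat.mod_lt _ (by norm_num)⟩ : Fin 3),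
          fun x y => by simp [min_comm]⟩) (w.edges.getD k s(u, u)) =
        ⟨(idx u + k + 2) % 3, Nat.mod_lt _ (by norm_num)⟩ := by
      intro k hk
      rw [edges_getD_aux w k (by omega) u]
      simp only [Sym2.lift_mk, Fin.mk.injEq]
      rw [hidxsup k u (by omega), hidxsup (k+1) u (by omega)]
      have hm : min (idx u + k) (idx u + (k+1)) = idx u + k := min_eq_left (by omega)
      rw [hm]
    have hpath : w.IsPath := by
      apply Walk.IsPath.mk'
      rw [List.nodup_iff_injective_getElem]
      intro ⟨k1, h1⟩ ⟨k2, h2⟩ heq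
      simp only at heq
      have hl : w.support.length = idx v - idx u + 1 := by rw [Walk.length_support, hwlen]
      have e1 : idx (w.support[k1]) = idx u + k1 := by
        rw [← List.getD_eq_getElem w.support u (by omega)]
        exact hidxsup k1 u (by omega)
      have e2 : idx (w.support[k2]) = idx u + k2 := by
        rw [← List.getD_eq_getElem w.support u (by omega)]
        exact hidxsup k2 u (by omega)
      rw [heq, e2] at e1
      simp only [Fin.mk.injEq]
      omega
    refine ⟨w, hpath, ?_, ?_, ?_⟩
    · intro k hk
      rw [hwlen] at hk
      rw [hce k (by omega), hce (k+1) (by omega)]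
      intro hcon
      simp only [Fin.mk.injEq] at hcon
      omega
    · intro k hk1 hk2
      rw [hwlen] at hk2
      have e1 := hidxsup k u (by omega)
      have e2 := hidxsup (k+1) u (by omega)
      intro hcon
      simp only [Fin.mk.injEq] at hcon
      rw [e1, e2] at hcon
      omega
    · intro k hk1 hk2
      rw [hwlen] at hk2
      constructor
      · rw [hce (k-1) (by omega)]
        have e1 := hidxsup k u (by omega)
        intro hcon
        simp only [Fin.mk.injEq] at hcon
        rw [e1] at hcon
        omega
      · rw [hce k (by omega)]
        have e1 := hidxsup k u (by omega)
        intro hcon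
        simp only [Fin.mk.injEq] at hcon
        rw [e1] at hcon
        omega
  · obtain ⟨q, hlen, hsup⟩ := exists_seg_down hch (idx u - idx v) (idx v) (idx u) rfl hle (hidxlt u)
    set w : G.Walk u v := q.copy (hgetidx u) (hgetidx v) with hwdef
    have hwlen : w.length = idx u - idx v := by rw [hwdef, Walk.length_copy]; exact hlen
    have hwsup : ∀ (k : ℕ) (d : V), k ≤ idx u - idx v →
        w.support.getD k d = L.getD (idx u - k) d := by
      intro k d hk
      rw [hwdef, Walk.support_copy]
      exact hsup k d hk
    have hidxsup : ∀ (k : ℕ) (d : V), k ≤ idx u - idx v →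
        idx (w.support.getD k d) = idx u - k := by
      intro k d hk
      rw [hwsup k d hk, List.getD_eq_getElem _ _ (by have := hidxlt u; omega), hidxget]
    have hce : ∀ (k : ℕ), k < idx u - idx v →
        (Sym2.lift ⟨fun x y => (⟨(min (idx x) (idx y) + 2) % 3, Nat.mod_lt _ (by norm_num)⟩ : Fin 3),
          fun x y => by simp [min_comm]⟩) (w.edges.getD k s(u, u)) =
        ⟨(idx u - k - 1 + 2) % 3, Nat.mod_lt _ (by norm_num)⟩ := by
      intro k hk
      rw [edges_getD_aux w k (by omega) u]
      simp only [Sym2.lift_mk, Fin.mk.injEq]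
      rw [hidxsup k u (by omega), hidxsup (k+1) u (by omega)]
      have hm : min (idx u - k) (idx u - (k+1)) = idx u - (k+1) := min_eq_right (by omega)
      rw [hm]
      omega
    have hpath : w.IsPath := by
      apply Walk.IsPath.mk'
      rw [List.nodup_iff_injective_getElem]
      intro ⟨k1, h1⟩ ⟨k2, h2⟩ heq
      simp only at heq
      have hl : w.support.length = idx u - idx v + 1 := by rw [Walk.length_support, hwlen]
      have e1 : idx (w.support[k1]) = idx u - k1 := by
        rw [← List.getD_eq_getElem w.support u (by omega)]
        exact hidxsup k1 u (by omega)
      have e2 : idx (w.support[k2]) = idx u - k2 := by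
        rw [← List.getD_eq_getElem w.support u (by omega)]
        exact hidxsup k2 u (by omega)
      rw [heq, e2] at e1
      simp only [Fin.mk.injEq]
      omega
    refine ⟨w, hpath, ?_, ?_, ?_⟩
    · intro k hk
      rw [hwlen] at hk
      rw [hce k (by omega), hce (k+1) (by omega)]
      intro hcon
      simp only [Fin.mk.injEq] at hcon
      omega
    · intro k hk1 hk2
      rw [hwlen] at hk2
      have e1 := hidxsup k u (by omega)
      have e2 := hidxsup (k+1) u (by omega)
      intro hcon
      simp only [Fin.mk.injEq] at hcon
      rw [e1, e2] at hcon
      omega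
    · intro k hk1 hk2
      rw [hwlen] at hk2
      constructor
      · rw [hce (k-1) (by omega)]
        have e1 := hidxsup k u (by omega)
        intro hcon
        simp only [Fin.mk.injEq] at hcon
        rw [e1] at hcon
        omega
      · rw [hce k (by omega)]
        have e1 := hidxsup k u (by omega)
        intro hcon
        simp only [Fin.mk.injEq] at hcon
        rw [e1] at hcon
        omega

/-- If `G` is a traceable graph (it has a Hamiltonian path) that is not complete,
then `tpc G = 3`. -/
theorem stmt_6 {V : Type*} [Fintype V] (G : SimpleGraph V)
    (htr : ∃ (u v : V) (p : G.Walk u v), p.IsPath ∧ ∀ x : V, x ∈ p.support)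
    (hnc : G ≠ (⊤ : SimpleGraph V)) :
    tpc G = 3 := by
  classical
  obtain ⟨a, b, p, hp, hall⟩ := htr
  have h3 : 3 ∈ {k | ∃ (cv : V → Fin k) (ce : Sym2 V → Fin k), TotalProperConnected G cv ce} :=
    three_mem G p hp hall
  have hxy : ∃ x y : V, x ≠ y ∧ ¬ G.Adj x y := by
    by_contra h
    push_neg at h
    apply hnc
    ext x y
    simp only [top_adj]
    exact ⟨fun hadj => G.ne_of_adj hadj, fun hne => h x y hne⟩
  refine le_antisymm (Nat.sInf_le h3) (le_csInf ⟨3, h3⟩ ?_)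
  rintro k ⟨cv, ce, htpc⟩
  by_contra hk
  push_neg at hk
  obtain ⟨x, y, hne, hnadj⟩ := hxy
  obtain ⟨w, hwp, h1, h2, h3'⟩ := htpc x y
  have hlen : 2 ≤ w.length := by
    by_contra hlt
    push_neg at hlt
    interval_cases h : w.length
    · exact hne (w.eq_of_length_eq_zero h)
    · cases w with
      | nil => simp at h
      | cons hadj q =>
        have h0 : q.length = 0 := by simp only [Walk.length_cons] at h; omega
        have := q.eq_of_length_eq_zero h0
        subst this
        exact hnadj hadj
  have he01 := h1 0 (by omega)
  obtain ⟨hv0, hv1⟩ := h3' 1 le_rfl (by omega)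
  simp only [Nat.sub_self] at hv0
  set e0 := ce (w.edges.getD 0 s(x, x))
  set e1 := ce (w.edges.getD 1 s(x, x))
  set c1 := cv (w.support.getD 1 x)
  have d1 : (e0 : ℕ) ≠ (e1 : ℕ) := fun h => he01 (Fin.ext h)
  have d2 : (c1 : ℕ) ≠ (e0 : ℕ) := fun h => hv0 (Fin.ext h)
  have d3 : (c1 : ℕ) ≠ (e1 : ℕ) := fun h => hv1 (Fin.ext h)
  have := e0.isLt
  have := e1.isLt
  have := c1.isLt
  omega
end

section
/- For the star K_{1,n} with n ≥ 2, tpc(K_{1,n}) = n + 1. -/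
open SimpleGraph

variable {V : Type*} {α : Type*}

lemma star_path_structure (n : ℕ) {i j : Fin n} (hij : i ≠ j)
    (w : (completeBipartiteGraph (Fin 1) (Fin n)).Walk (Sum.inr i) (Sum.inr j))
    (hp : w.IsPath) :
    w.edges = [s(Sum.inr i, Sum.inl 0), s(Sum.inl 0, Sum.inr j)] ∧
    w.support = [Sum.inr i, Sum.inl 0, Sum.inr j] ∧ w.length = 2 := by
  cases w with
  | nil => simp at hij
  | @cons _ x _ h1 w' =>
    cases x with
    | inr m => simp at h1
    | inl a =>
      have ha : a = 0 := Subsingleton.elim a 0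
      subst ha
      cases w' with
      | @cons _ y _ h2 w'' =>
        cases y with
        | inl b => simp at h2
        | inr m =>
          cases w'' with
          | nil => simp
          | @cons _ z _ h3 w''' =>
            cases z with
            | inr p => simp at h3
            | inl b =>
              have hb : b = (0 : Fin 1) := Subsingleton.elim b 0
              subst hb
              simp [Walk.cons_isPath_iff] at hp

def starCE (n : ℕ) : Sym2 (Fin 1 ⊕ Fin n) → Fin (n + 1) :=
  Sym2.lift ⟨fun a b =>
    match a, b with
    | Sum.inl _, Sum.inr j => j.castSucc
    | Sum.inr j, Sum.inl _ => j.castSucc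
    | _, _ => 0,
    by intro a b; rcases a with a | a <;> rcases b with b | b <;> rfl⟩


/-- For the star `K_{1,n}` with `n ≥ 2`, `tpc (K_{1,n}) = n + 1`. -/
theorem stmt_7 (n : ℕ) (hn : 2 ≤ n) :
    tpc (completeBipartiteGraph (Fin 1) (Fin n)) = n + 1 := by
  have hmem : (n + 1) ∈ {k | ∃ (cv : Fin 1 ⊕ Fin n → Fin k)
      (ce : Sym2 (Fin 1 ⊕ Fin n) → Fin k),
      TotalProperConnected (completeBipartiteGraph (Fin 1) (Fin n)) cv ce} := by
    refine ⟨fun v => match v with | Sum.inl _ => Fin.last n | Sum.inr _ => 0,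
      starCE n, ?_⟩
    intro u v
    rcases u with a | i <;> rcases v with b | j
    · have : a = b := Subsingleton.elim a b
      subst this
      exact ⟨Walk.nil, by simp, by refine ⟨?_, ?_, ?_⟩ <;> intro i <;> simp <;> omega⟩
    · have h1 : (completeBipartiteGraph (Fin 1) (Fin n)).Adj (Sum.inl a) (Sum.inr j) := by simp
      refine ⟨Walk.cons h1 Walk.nil, by simp, ?_, ?_, ?_⟩ <;> intro i <;> simp <;> omega
    · have h1 : (completeBipartiteGraph (Fin 1) (Fin n)).Adj (Sum.inr i) (Sum.inl b) := by simp
      refine ⟨Walk.cons h1 Walk.nil, by simp, ?_, ?_, ?_⟩ <;> intro i <;> simp <;> omega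
    · by_cases hij : i = j
      · subst hij
        exact ⟨Walk.nil, by simp, by refine ⟨?_, ?_, ?_⟩ <;> intro i <;> simp <;> omega⟩
      · have h1 : (completeBipartiteGraph (Fin 1) (Fin n)).Adj (Sum.inr i) (Sum.inl 0) := by simp
        have h2 : (completeBipartiteGraph (Fin 1) (Fin n)).Adj (Sum.inl 0) (Sum.inr j) := by simp
        refine ⟨Walk.cons h1 (Walk.cons h2 Walk.nil), by simp [Walk.isPath_def, hij], ?_, ?_, ?_⟩
        · intro k hk
          simp only [Walk.length_cons, Walk.length_nil] at hk
          have hk0 : k = 0 := by omega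
          subst hk0
          simp [starCE, Sym2.lift_mk]
          exact hij
        · intro k hk1 hk2
          simp only [Walk.length_cons, Walk.length_nil] at hk2
          omega
        · intro k hk1 hk2
          simp only [Walk.length_cons, Walk.length_nil] at hk2
          have hk0 : k = 1 := by omega
          subst hk0
          constructor <;> simp [starCE, Sym2.lift_mk] <;>
            exact (Fin.castSucc_lt_last _).ne'
  have hlb : ∀ k ∈ {k | ∃ (cv : Fin 1 ⊕ Fin n → Fin k)
      (ce : Sym2 (Fin 1 ⊕ Fin n) → Fin k),
      TotalProperConnected (completeBipartiteGraph (Fin 1) (Fin n)) cv ce},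
      n + 1 ≤ k := by
    rintro k ⟨cv, ce, htpc⟩
    -- edge colors pairwise distinct and distinct from center color
    have key : ∀ i j : Fin n, i ≠ j →
        ce s(Sum.inl 0, Sum.inr i) ≠ ce s(Sum.inl 0, Sum.inr j) ∧
        cv (Sum.inl 0) ≠ ce s(Sum.inl 0, Sum.inr i) := by
      intro i j hij
      obtain ⟨w, hp, h1, h2, h3⟩ := htpc (Sum.inr i) (Sum.inr j)
      obtain ⟨he, hs, hl⟩ := star_path_structure n hij w hp
      have hA := h1 0 (by omega)
      have hB := h3 1 le_rfl (by omega)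
      rw [he, hs] at *
      simp at hA hB
      rw [Sym2.eq_swap (a := Sum.inr i)] at hA hB
      exact ⟨hA, hB.1⟩
    set f : Fin (n + 1) → Fin k := fun m =>
      if h : (m : ℕ) < n then ce s(Sum.inl 0, Sum.inr ⟨m, h⟩) else cv (Sum.inl 0) with hf
    have hinj : Function.Injective f := by
      intro a b hab
      by_contra hne
      rcases lt_or_ge (a : ℕ) n with ha | ha <;> rcases lt_or_ge (b : ℕ) n with hb | hb
      · have : (⟨a, ha⟩ : Fin n) ≠ ⟨b, hb⟩ := by
          simp only [ne_eq, Fin.mk.injEq]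
          exact fun h => hne (Fin.ext h)
        exact (key _ _ this).1 (by simpa [hf, ha, hb] using hab)
      · -- b = last, a < n
        obtain ⟨j, hj, hjne⟩ : ∃ j : Fin n, (j : ℕ) < n ∧ j ≠ ⟨a, ha⟩ := by
          rcases Nat.lt_or_ge ((a : ℕ) + 1) n with h | h
          · exact ⟨⟨a + 1, h⟩, h, by simp [Fin.ext_iff]⟩
          · refine ⟨⟨0, by omega⟩, by omega, ?_⟩
            simp only [ne_eq, Fin.mk.injEq]
            omega
        simp only [hf] at hab
        rw [dif_pos ha, dif_neg (by omega)] at hab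
        exact (key ⟨a, ha⟩ j hjne.symm).2 hab.symm
      · obtain ⟨j, hj, hjne⟩ : ∃ j : Fin n, (j : ℕ) < n ∧ j ≠ ⟨b, hb⟩ := by
          rcases Nat.lt_or_ge ((b : ℕ) + 1) n with h | h
          · exact ⟨⟨b + 1, h⟩, h, by simp [Fin.ext_iff]⟩
          · refine ⟨⟨0, by omega⟩, by omega, ?_⟩
            simp only [ne_eq, Fin.mk.injEq]
            omega
        simp only [hf] at hab
        rw [dif_neg (by omega), dif_pos hb] at hab
        exact (key ⟨b, hb⟩ j hjne.symm).2 hab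
      · exact hne (Fin.ext (by omega))
    have := Fintype.card_le_of_injective f hinj
    simpa using this
  have hne : {k | ∃ (cv : Fin 1 ⊕ Fin n → Fin k)
      (ce : Sym2 (Fin 1 ⊕ Fin n) → Fin k),
      TotalProperConnected (completeBipartiteGraph (Fin 1) (Fin n)) cv ce}.Nonempty := ⟨_, hmem⟩
  exact le_antisymm (Nat.sInf_le hmem) (le_csInf hne hlb)
end

section
/- For the complete bipartite graph K_{m,n} with 2 ≤ m ≤ n, tpc(K_{m,n}) = 3. -/
open SimpleGraph

variable {V : Type*} {α : Type*}

/-! ### Auxiliary material -/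

section WalkHelpers
variable {G : SimpleGraph V} (cv : V → α) (ce : Sym2 V → α)

lemma tpw_nil (u : V) : IsTotalProperWalk cv ce (Walk.nil : G.Walk u u) := by
  refine ⟨?_, ?_, ?_⟩ <;> intro i <;> simp

lemma tpw_one {u v : V} (h : G.Adj u v) :
    IsTotalProperWalk cv ce (Walk.cons h Walk.nil) := by
  refine ⟨?_, ?_, ?_⟩ <;> intro i <;> simp <;> omega

lemma tpw_two {u v w : V} (h1 : G.Adj u v) (h2 : G.Adj v w)
    (he : ce s(u,v) ≠ ce s(v,w)) (hv1 : cv v ≠ ce s(u,v)) (hv2 : cv v ≠ ce s(v,w)) :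
    IsTotalProperWalk cv ce (Walk.cons h1 (Walk.cons h2 Walk.nil)) := by
  refine ⟨?_, ?_, ?_⟩ <;> intro i hi
  · simp only [Walk.length_cons, Walk.length_nil] at hi
    obtain rfl : i = 0 := by omega
    simpa using he
  · intro hi2; simp only [Walk.length_cons, Walk.length_nil] at hi2; omega
  · intro hi2
    simp only [Walk.length_cons, Walk.length_nil] at hi2
    obtain rfl : i = 1 := by omega
    simpa using ⟨hv1, hv2⟩

lemma tpw_four {u v w x y : V} (h1 : G.Adj u v) (h2 : G.Adj v w) (h3 : G.Adj w x)
    (h4 : G.Adj x y)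
    (he1 : ce s(u,v) ≠ ce s(v,w)) (he2 : ce s(v,w) ≠ ce s(w,x)) (he3 : ce s(w,x) ≠ ce s(x,y))
    (hvw : cv v ≠ cv w) (hwx : cv w ≠ cv x)
    (hv1 : cv v ≠ ce s(u,v)) (hv2 : cv v ≠ ce s(v,w))
    (hw1 : cv w ≠ ce s(v,w)) (hw2 : cv w ≠ ce s(w,x))
    (hx1 : cv x ≠ ce s(w,x)) (hx2 : cv x ≠ ce s(x,y)) :
    IsTotalProperWalk cv ce
      (Walk.cons h1 (Walk.cons h2 (Walk.cons h3 (Walk.cons h4 Walk.nil)))) := by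
  refine ⟨?_, ?_, ?_⟩ <;> intro i hi
  · simp only [Walk.length_cons, Walk.length_nil] at hi
    have hub : i < 3 := by omega
    interval_cases i
    · simpa using he1
    · simpa using he2
    · simpa using he3
  · intro hi2
    simp only [Walk.length_cons, Walk.length_nil] at hi2
    have hub : i < 3 := by omega
    interval_cases i
    · simpa using hvw
    · simpa using hwx
  · intro hi2
    simp only [Walk.length_cons, Walk.length_nil] at hi2
    have hub : 1 ≤ i ∧ i < 4 := ⟨hi, by omega⟩
    interval_cases i
    · simpa using ⟨hv1, hv2⟩
    · simpa using ⟨hw1, hw2⟩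
    · simpa using ⟨hx1, hx2⟩

lemma ip_one {u v : V} (h : G.Adj u v) : (Walk.cons h Walk.nil).IsPath := by
  simp [Walk.isPath_def, h.ne]

lemma ip_two {u v w : V} (h1 : G.Adj u v) (h2 : G.Adj v w) (huw : u ≠ w) :
    (Walk.cons h1 (Walk.cons h2 Walk.nil)).IsPath := by
  simp [Walk.isPath_def, h1.ne, h2.ne, huw]

lemma ip_four {u v w x y : V} (h1 : G.Adj u v) (h2 : G.Adj v w) (h3 : G.Adj w x)
    (h4 : G.Adj x y) (huw : u ≠ w) (hux : u ≠ x) (huy : u ≠ y) (hvx : v ≠ x)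
    (hvy : v ≠ y) (hwy : w ≠ y) :
    (Walk.cons h1 (Walk.cons h2 (Walk.cons h3 (Walk.cons h4 Walk.nil)))).IsPath := by
  simp [Walk.isPath_def, h1.ne, h2.ne, h3.ne, h4.ne, huw, hux, huy, hvx, hvy, hwy]

end WalkHelpers

/-- The edge color matrix for the 3-total-coloring of `K_{m,n}`. -/
def McK (i j : ℕ) : Fin 3 :=
  if i = 0 then (if j = 0 then 2 else 0)
  else if i = 1 then (if j = 0 then 1 else if j = 1 then 2 else 0)
  else (if j = 0 then 1 else if j = 1 then 0 else if j = i then 2 else 1)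

lemma McK_00 : McK 0 0 = 2 := rfl
lemma McK_0j {j : ℕ} (h : j ≠ 0) : McK 0 j = 0 := by simp [McK, h]
lemma McK_t0 {t : ℕ} (h : t ≠ 0) : McK t 0 = 1 := by
  simp only [McK, if_neg h]; split <;> simp
lemma McK_11 : McK 1 1 = 2 := rfl
lemma McK_1j {j : ℕ} (h : 2 ≤ j) : McK 1 j = 0 := by
  have h0 : j ≠ 0 := by omega
  have h1 : j ≠ 1 := by omega
  simp [McK, h0, h1]
lemma McK_t1 {t : ℕ} (h : 2 ≤ t) : McK t 1 = 0 := by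
  have h0 : t ≠ 0 := by omega
  have h1 : t ≠ 1 := by omega
  simp [McK, h0, h1]
lemma McK_tt {t : ℕ} (h : 2 ≤ t) : McK t t = 2 := by
  have h0 : t ≠ 0 := by omega
  have h1 : t ≠ 1 := by omega
  simp [McK, h0, h1]
lemma McK_ts {t s : ℕ} (ht : 2 ≤ t) (hs : 2 ≤ s) (hne : t ≠ s) : McK t s = 1 := by
  have h0 : t ≠ 0 := by omega
  have h1 : t ≠ 1 := by omega
  have h2 : s ≠ 0 := by omega
  have h3 : s ≠ 1 := by omega
  have h4 : s ≠ t := by omega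
  simp [McK, h0, h1, h2, h3, h4]

/-- The vertex coloring. -/
def cvK {m n : ℕ} : Fin m ⊕ Fin n → Fin 3
  | .inl i => if (i : ℕ) = 0 then 1 else if (i : ℕ) = 1 then 2 else 0
  | .inr j => if (j : ℕ) = 1 then 1 else 0

def fK {m n : ℕ} : (Fin m ⊕ Fin n) → (Fin m ⊕ Fin n) → Fin 3
  | .inl i, .inr j => McK i j
  | .inr j, .inl i => McK i j
  | _, _ => 0

/-- The edge coloring. -/
def ceK {m n : ℕ} : Sym2 (Fin m ⊕ Fin n) → Fin 3 :=
  Sym2.lift ⟨fK, by intro u v; cases u <;> cases v <;> rfl⟩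

lemma ceK_lr {m n : ℕ} (i : Fin m) (j : Fin n) :
    ceK s(Sum.inl i, Sum.inr j) = McK i j := rfl
lemma ceK_rl {m n : ℕ} (i : Fin m) (j : Fin n) :
    ceK s(Sum.inr j, Sum.inl i) = McK i j := rfl

lemma adjLR {m n : ℕ} (i : Fin m) (j : Fin n) :
    (completeBipartiteGraph (Fin m) (Fin n)).Adj (Sum.inl i) (Sum.inr j) := by
  simp [completeBipartiteGraph]

lemma adjRL {m n : ℕ} (i : Fin m) (j : Fin n) :
    (completeBipartiteGraph (Fin m) (Fin n)).Adj (Sum.inr j) (Sum.inl i) := by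
  simp [completeBipartiteGraph]

lemma cvK_l0 {m n : ℕ} {i : Fin m} (h : (i:ℕ) = 0) : (cvK (Sum.inl i : Fin m ⊕ Fin n)) = 1 := by
  simp [cvK, h]
lemma cvK_l1 {m n : ℕ} {i : Fin m} (h : (i:ℕ) = 1) : (cvK (Sum.inl i : Fin m ⊕ Fin n)) = 2 := by
  simp [cvK, h]
lemma cvK_l2 {m n : ℕ} {i : Fin m} (h : 2 ≤ (i:ℕ)) : (cvK (Sum.inl i : Fin m ⊕ Fin n)) = 0 := by
  have h0 : (i:ℕ) ≠ 0 := by omega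
  have h1 : (i:ℕ) ≠ 1 := by omega
  simp [cvK, h0, h1]
lemma cvK_r1 {m n : ℕ} {j : Fin n} (h : (j:ℕ) = 1) : (cvK (Sum.inr j : Fin m ⊕ Fin n)) = 1 := by
  simp [cvK, h]
lemma cvK_r {m n : ℕ} {j : Fin n} (h : (j:ℕ) ≠ 1) : (cvK (Sum.inr j : Fin m ⊕ Fin n)) = 0 := by
  simp [cvK, h]

lemma tpcK {m n : ℕ} (hm : 2 ≤ m) (hmn : m ≤ n) :
    TotalProperConnected (completeBipartiteGraph (Fin m) (Fin n)) cvK ceK := by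
  have hn : 2 ≤ n := hm.trans hmn
  intro u v
  rcases u with i | j <;> rcases v with i' | j'
  · -- inl, inl
    by_cases h : i = i'
    · subst h; exact ⟨Walk.nil, by simp, tpw_nil _ _ _⟩
    have hne : (i:ℕ) ≠ (i':ℕ) := fun hh => h (Fin.ext hh)
    have hll : (Sum.inl i : Fin m ⊕ Fin n) ≠ Sum.inl i' := by simp [h]
    by_cases hi0 : (i:ℕ) = 0
    · set k : Fin n := ⟨0, by omega⟩ with hkdef
      have hk : (k:ℕ) = 0 := rfl
      refine ⟨Walk.cons (adjLR i k) (Walk.cons (adjRL i' k) Walk.nil),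
        ip_two _ _ hll, tpw_two _ _ _ _ ?_ ?_ ?_⟩
      · rw [ceK_lr, ceK_rl, hk, hi0, McK_00, McK_t0 (by omega)]; decide
      · rw [ceK_lr, cvK_r (by omega), hk, hi0, McK_00]; decide
      · rw [ceK_rl, cvK_r (by omega), hk, McK_t0 (by omega)]; decide
    by_cases hi'0 : (i':ℕ) = 0
    · set k : Fin n := ⟨0, by omega⟩ with hkdef
      have hk : (k:ℕ) = 0 := rfl
      refine ⟨Walk.cons (adjLR i k) (Walk.cons (adjRL i' k) Walk.nil),
        ip_two _ _ hll, tpw_two _ _ _ _ ?_ ?_ ?_⟩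
      · rw [ceK_lr, ceK_rl, hk, hi'0, McK_00, McK_t0 (by omega)]; decide
      · rw [ceK_lr, cvK_r (by omega), hk, McK_t0 (by omega)]; decide
      · rw [ceK_rl, cvK_r (by omega), hk, hi'0, McK_00]; decide
    by_cases hi1 : (i:ℕ) = 1
    · -- i = 1, i' ≥ 2
      have hi'2 : 2 ≤ (i':ℕ) := by omega
      set k : Fin n := ⟨1, by omega⟩ with hkdef
      have hk : (k:ℕ) = 1 := rfl
      refine ⟨Walk.cons (adjLR i k) (Walk.cons (adjRL i' k) Walk.nil),
        ip_two _ _ hll, tpw_two _ _ _ _ ?_ ?_ ?_⟩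
      · rw [ceK_lr, ceK_rl, hk, hi1, McK_11, McK_t1 hi'2]; decide
      · rw [ceK_lr, cvK_r1 hk, hk, hi1, McK_11]; decide
      · rw [ceK_rl, cvK_r1 hk, hk, McK_t1 hi'2]; decide
    by_cases hi'1 : (i':ℕ) = 1
    · have hi2 : 2 ≤ (i:ℕ) := by omega
      set k : Fin n := ⟨1, by omega⟩ with hkdef
      have hk : (k:ℕ) = 1 := rfl
      refine ⟨Walk.cons (adjLR i k) (Walk.cons (adjRL i' k) Walk.nil),
        ip_two _ _ hll, tpw_two _ _ _ _ ?_ ?_ ?_⟩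
      · rw [ceK_lr, ceK_rl, hk, hi'1, McK_11, McK_t1 hi2]; decide
      · rw [ceK_lr, cvK_r1 hk, hk, McK_t1 hi2]; decide
      · rw [ceK_rl, cvK_r1 hk, hk, hi'1, McK_11]; decide
    · -- both ≥ 2
      have hi2 : 2 ≤ (i:ℕ) := by omega
      have hi'2 : 2 ≤ (i':ℕ) := by omega
      set k : Fin n := ⟨(i:ℕ), by omega⟩ with hkdef
      have hk : (k:ℕ) = (i:ℕ) := rfl
      refine ⟨Walk.cons (adjLR i k) (Walk.cons (adjRL i' k) Walk.nil),
        ip_two _ _ hll, tpw_two _ _ _ _ ?_ ?_ ?_⟩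
      · rw [ceK_lr, ceK_rl, hk, McK_tt hi2, McK_ts hi'2 hi2 (by omega)]; decide
      · rw [ceK_lr, cvK_r (by omega), hk, McK_tt hi2]; decide
      · rw [ceK_rl, cvK_r (by omega), hk, McK_ts hi'2 hi2 (by omega)]; decide
  · -- inl, inr : single edge
    exact ⟨Walk.cons (adjLR i j') Walk.nil, ip_one _, tpw_one _ _ _⟩
  · -- inr, inl : single edge
    exact ⟨Walk.cons (adjRL i' j) Walk.nil, ip_one _, tpw_one _ _ _⟩
  · -- inr, inr
    by_cases h : j = j'
    · subst h; exact ⟨Walk.nil, by simp, tpw_nil _ _ _⟩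
    have hne : (j:ℕ) ≠ (j':ℕ) := fun hh => h (Fin.ext hh)
    have hrr : (Sum.inr j : Fin m ⊕ Fin n) ≠ Sum.inr j' := by simp [h]
    set a0 : Fin m := ⟨0, by omega⟩ with ha0def
    have ha0 : (a0:ℕ) = 0 := rfl
    set a1 : Fin m := ⟨1, by omega⟩ with ha1def
    have ha1 : (a1:ℕ) = 1 := rfl
    set b0 : Fin n := ⟨0, by omega⟩ with hb0def
    have hb0 : (b0:ℕ) = 0 := rfl
    by_cases hj0 : (j:ℕ) = 0
    · refine ⟨Walk.cons (adjRL a0 j) (Walk.cons (adjLR a0 j') Walk.nil),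
        ip_two _ _ hrr, tpw_two _ _ _ _ ?_ ?_ ?_⟩
      · rw [ceK_rl, ceK_lr, ha0, hj0, McK_00, McK_0j (by omega)]; decide
      · rw [ceK_rl, cvK_l0 ha0, ha0, hj0, McK_00]; decide
      · rw [ceK_lr, cvK_l0 ha0, ha0, McK_0j (by omega)]; decide
    by_cases hj'0 : (j':ℕ) = 0
    · refine ⟨Walk.cons (adjRL a0 j) (Walk.cons (adjLR a0 j') Walk.nil),
        ip_two _ _ hrr, tpw_two _ _ _ _ ?_ ?_ ?_⟩
      · rw [ceK_rl, ceK_lr, ha0, hj'0, McK_00, McK_0j (by omega)]; decide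
      · rw [ceK_rl, cvK_l0 ha0, ha0, McK_0j (by omega)]; decide
      · rw [ceK_lr, cvK_l0 ha0, ha0, hj'0, McK_00]; decide
    have hA01 : (Sum.inl a0 : Fin m ⊕ Fin n) ≠ Sum.inl a1 := by
      intro hh
      have h2 := congrArg Fin.val (Sum.inl.inj hh)
      rw [ha0, ha1] at h2
      exact absurd h2 (by omega)
    have hA10 : (Sum.inl a1 : Fin m ⊕ Fin n) ≠ Sum.inl a0 := fun hh => hA01 hh.symm
    have hjb : (Sum.inr j : Fin m ⊕ Fin n) ≠ Sum.inr b0 := by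
      intro hh; apply hj0; rw [Sum.inr.inj hh, hb0]
    have hbj' : (Sum.inr b0 : Fin m ⊕ Fin n) ≠ Sum.inr j' := by
      intro hh; apply hj'0; rw [← Sum.inr.inj hh, hb0]
    have hb1 : ((b0 : Fin n) : ℕ) ≠ 1 := by rw [hb0]; omega
    by_cases hj'2 : 2 ≤ (j':ℕ)
    · -- path j - a0 - b0 - a1 - j'
      refine ⟨Walk.cons (adjRL a0 j) (Walk.cons (adjLR a0 b0)
          (Walk.cons (adjRL a1 b0) (Walk.cons (adjLR a1 j') Walk.nil))),
        ip_four _ _ _ _ hjb (by simp) hrr hA01 (by simp) hbj',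
        tpw_four _ _ _ _ _ _ ?_ ?_ ?_ ?_ ?_ ?_ ?_ ?_ ?_ ?_ ?_⟩
      all_goals
        simp only [ceK_lr, ceK_rl, ha0, ha1, hb0,
          cvK_l0 (ha0), cvK_l1 (ha1), cvK_r hb1,
          McK_00, McK_0j (show (j:ℕ) ≠ 0 from hj0),
          McK_t0 (show (1:ℕ) ≠ 0 by omega), McK_1j hj'2]
        decide
    · -- j' = 1, j ≥ 2 : path j - a1 - b0 - a0 - j'
      have hj2 : 2 ≤ (j:ℕ) := by omega
      refine ⟨Walk.cons (adjRL a1 j) (Walk.cons (adjLR a1 b0)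
          (Walk.cons (adjRL a0 b0) (Walk.cons (adjLR a0 j') Walk.nil))),
        ip_four _ _ _ _ hjb (by simp) hrr hA10 (by simp) hbj',
        tpw_four _ _ _ _ _ _ ?_ ?_ ?_ ?_ ?_ ?_ ?_ ?_ ?_ ?_ ?_⟩
      all_goals
        simp only [ceK_lr, ceK_rl, ha0, ha1, hb0,
          cvK_l0 (ha0), cvK_l1 (ha1), cvK_r hb1,
          McK_00, McK_0j (show (j':ℕ) ≠ 0 from hj'0),
          McK_t0 (show (1:ℕ) ≠ 0 by omega), McK_1j hj2]
        decide

lemma three_le_of_mem {m n k : ℕ} (hm : 2 ≤ m)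
    (cv : Fin m ⊕ Fin n → Fin k) (ce : Sym2 (Fin m ⊕ Fin n) → Fin k)
    (h : TotalProperConnected (completeBipartiteGraph (Fin m) (Fin n)) cv ce) : 3 ≤ k := by
  obtain ⟨w, hp, hw⟩ :=
    h (Sum.inl ⟨0, by omega⟩) (Sum.inl ⟨1, by omega⟩)
  rcases w with _ | ⟨ha, _ | ⟨hb, p⟩⟩
  · simp [completeBipartiteGraph] at ha
  obtain ⟨h1, h2, h3⟩ := hw
  have hlen : 2 ≤ (Walk.cons ha (Walk.cons hb p)).length := by
    simp only [Walk.length_cons]; omega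
  have he := h1 0 (by omega)
  have hv := h3 1 le_rfl (by omega)
  simp only [Walk.edges_cons, Walk.support_cons, List.getD_cons_zero,
    List.getD_cons_succ, Nat.sub_self] at he hv
  have h2lt : 2 < Fintype.card (Fin k) := by
    rw [Fintype.two_lt_card_iff]
    exact ⟨_, _, _, he, hv.1.symm, hv.2.symm⟩
  exact (by simpa using h2lt : 2 < k)

/-- For the complete bipartite graph `K_{m,n}` with `2 ≤ m ≤ n`, `tpc (K_{m,n}) = 3`. -/
theorem stmt_8 (m n : ℕ) (hm : 2 ≤ m) (hmn : m ≤ n) :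
    tpc (completeBipartiteGraph (Fin m) (Fin n)) = 3 := by
  have h3 : 3 ∈ {k | ∃ (cv : Fin m ⊕ Fin n → Fin k) (ce : Sym2 (Fin m ⊕ Fin n) → Fin k),
      TotalProperConnected (completeBipartiteGraph (Fin m) (Fin n)) cv ce} :=
    ⟨cvK, ceK, tpcK hm hmn⟩
  refine le_antisymm (Nat.sInf_le h3) (le_csInf ⟨3, h3⟩ ?_)
  rintro k ⟨cv, ce, hk⟩
  exact three_le_of_mem hm cv ce hk
end

section
/- For the cycle C_n with n ≥ 4 vertices, tpc(C_n) = 3 (and tpc(C_3) = 1). -/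
open SimpleGraph

variable {V : Type*} {α : Type*}

namespace TPCAux

variable {G : SimpleGraph V}

/-- Build a walk following `f 0, f 1, …, f k`. -/
def buildWalk (f : ℕ → V) : (k : ℕ) → (∀ i < k, G.Adj (f i) (f (i+1))) → G.Walk (f 0) (f k)
  | 0, _ => Walk.nil
  | (k+1), h => (buildWalk f k (fun i hi => h i (by omega))).concat (h k (by omega))

lemma length_buildWalk (f : ℕ → V) (k : ℕ) (h : ∀ i < k, G.Adj (f i) (f (i+1))) :
    (buildWalk f k h).length = k := by
  induction k with
  | zero => rfl
  | succ k ih => simp [buildWalk, Walk.length_concat, ih]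

lemma support_buildWalk (f : ℕ → V) (k : ℕ) (h : ∀ i < k, G.Adj (f i) (f (i+1))) :
    (buildWalk f k h).support = (List.range (k+1)).map f := by
  induction k with
  | zero => rfl
  | succ k ih =>
    simp only [buildWalk, Walk.support_concat, ih, List.concat_eq_append,
      List.range_succ (n := k+1), List.map_append]
    rfl

lemma edges_buildWalk (f : ℕ → V) (k : ℕ) (h : ∀ i < k, G.Adj (f i) (f (i+1))) :
    (buildWalk f k h).edges = (List.range k).map (fun i => s(f i, f (i+1))) := by
  induction k with
  | zero => rfl
  | succ k ih =>
    simp only [buildWalk, Walk.edges_concat, ih, List.concat_eq_append,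
      List.range_succ (n := k), List.map_append]
    rfl

lemma getD_map_range {β : Type*} (f : ℕ → β) (m i : ℕ) (hi : i < m) (d : β) :
    ((List.range m).map f).getD i d = f i := by
  rw [List.getD_eq_getElem _ d (by simpa using hi)]
  simp

lemma isPath_buildWalk (f : ℕ → V) (k : ℕ) (h : ∀ i < k, G.Adj (f i) (f (i+1)))
    (hinj : ∀ i ≤ k, ∀ j ≤ k, f i = f j → i = j) :
    (buildWalk f k h).IsPath := by
  rw [Walk.isPath_def, support_buildWalk]
  refine List.Nodup.map_on ?_ List.nodup_range
  intro x hx y hy hxy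
  exact hinj x (Nat.lt_succ_iff.mp (List.mem_range.mp hx))
    y (Nat.lt_succ_iff.mp (List.mem_range.mp hy)) hxy

/-- The vertex coloring for the cycle. -/
def cvF (n : ℕ) : Fin n → Fin 3 := fun i => ⟨2 * i.val % 3, by omega⟩

/-- The edge coloring for the cycle. -/
def ceF (n : ℕ) : Sym2 (Fin n) → Fin 3 :=
  Sym2.lift ⟨fun a b =>
    if (b : ℕ) = (a : ℕ) + 1 then ⟨(2 * (a : ℕ) + 1) % 3, by omega⟩
    else if (a : ℕ) = (b : ℕ) + 1 then ⟨(2 * (b : ℕ) + 1) % 3, by omega⟩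
    else 0,
    by
      intro a b
      dsimp only
      by_cases h1 : (b : ℕ) = (a : ℕ) + 1
      · by_cases h2 : (a : ℕ) = (b : ℕ) + 1
        · exact absurd h2 (by omega)
        · rw [if_pos h1, if_neg h2, if_pos h1]
      · by_cases h2 : (a : ℕ) = (b : ℕ) + 1
        · rw [if_neg h1, if_pos h2, if_pos h2]
        · rw [if_neg h1, if_neg h2, if_neg h2, if_neg h1]⟩

lemma ceF_eval {n : ℕ} (x y : Fin n) (h : (y : ℕ) = (x : ℕ) + 1) :
    ceF n s(x, y) = ⟨(2 * (x : ℕ) + 1) % 3, by omega⟩ := by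
  simp only [ceF, Sym2.lift_mk]
  rw [if_pos h]

lemma adj_of_val {n : ℕ} (hn : 4 ≤ n) (x y : Fin n) (h : (y : ℕ) = (x : ℕ) + 1) :
    (cycleGraph n).Adj x y := by
  rw [cycleGraph_adj']
  right
  have hx := x.isLt
  have hy := y.isLt
  have hs : (y - x).val = ((n - (x : ℕ)) + (y : ℕ)) % n := by rw [Fin.sub_def]
  rw [hs]
  have h2 : (n - (x : ℕ)) + (y : ℕ) = n + 1 := by omega
  rw [h2, Nat.add_mod_left, Nat.mod_eq_of_lt (by omega)]

lemma three_mem {n : ℕ} (hn : 4 ≤ n) :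
    TotalProperConnected (cycleGraph n) (cvF n) (ceF n) := by
  intro u v
  have hu := u.isLt
  have hv := v.isLt
  rcases le_or_gt (u : ℕ) (v : ℕ) with huv | huv
  · -- forward walk
    set k := (v : ℕ) - (u : ℕ) with hk
    set f : ℕ → Fin n := fun i => ⟨(u : ℕ) + min i k, by omega⟩ with hf
    have hfi : ∀ i ≤ k, ((f i) : ℕ) = (u : ℕ) + i := by
      intro i hi
      simp [hf, Nat.min_eq_left hi]
    have hadj : ∀ i < k, (cycleGraph n).Adj (f i) (f (i+1)) := by
      intro i hi
      exact adj_of_val hn _ _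
        (by have e1 := hfi i (le_of_lt hi); have e2 := hfi (i+1) hi; omega)
    have h0 : f 0 = u := Fin.ext (hfi 0 (Nat.zero_le _))
    have hkv : f k = v := Fin.ext (by have := hfi k le_rfl; omega)
    refine ⟨(buildWalk f k hadj).copy h0 hkv, ?_, ?_⟩
    · rw [Walk.isPath_copy]
      refine isPath_buildWalk f k hadj ?_
      intro i hi j hj hij
      have := congrArg (Fin.val) hij
      rw [hfi i hi, hfi j hj] at this
      omega
    · have hlen : ((buildWalk f k hadj).copy h0 hkv).length = k := by
        rw [Walk.length_copy, length_buildWalk]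
      have hsup : ∀ i ≤ k,
          cvF n (((buildWalk f k hadj).copy h0 hkv).support.getD i u)
            = ⟨2 * ((u : ℕ) + i) % 3, by omega⟩ := by
        intro i hi
        rw [Walk.support_copy, support_buildWalk, getD_map_range _ _ _ (by omega)]
        have e : f i = ⟨(u : ℕ) + i, by omega⟩ := Fin.ext (hfi i hi)
        rw [e]
        rfl
      have hedg : ∀ i < k,
          ceF n (((buildWalk f k hadj).copy h0 hkv).edges.getD i s(u, u))
            = ⟨(2 * ((u : ℕ) + i) + 1) % 3, by omega⟩ := by
        intro i hi
        rw [Walk.edges_copy, edges_buildWalk, getD_map_range _ _ _ hi]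
        have e1 : f i = ⟨(u : ℕ) + i, by omega⟩ := Fin.ext (hfi i (le_of_lt hi))
        have e2 : f (i+1) = ⟨(u : ℕ) + i + 1, by omega⟩ := Fin.ext (hfi (i+1) hi)
        rw [e1, e2, ceF_eval _ _ rfl]
      refine ⟨?_, ?_, ?_⟩
      · intro i hi
        rw [hlen] at hi
        rw [hedg i (by omega), hedg (i+1) (by omega)]
        simp only [ne_eq, Fin.mk.injEq]
        omega
      · intro i h1 hi
        rw [hlen] at hi
        rw [hsup i (by omega), hsup (i+1) (by omega)]
        simp only [ne_eq, Fin.mk.injEq]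
        omega
      · intro i h1 hi
        rw [hlen] at hi
        rw [hsup i (by omega), hedg (i-1) (by omega), hedg i (by omega)]
        constructor <;> (simp only [ne_eq, Fin.mk.injEq]; omega)
  · -- backward walk
    set k := (u : ℕ) - (v : ℕ) with hk
    set f : ℕ → Fin n := fun i => ⟨(u : ℕ) - i, by omega⟩ with hf
    have hfi : ∀ i, ((f i) : ℕ) = (u : ℕ) - i := fun i => rfl
    have hadj : ∀ i < k, (cycleGraph n).Adj (f i) (f (i+1)) := by
      intro i hi
      exact (adj_of_val hn (f (i+1)) (f i)
        (show (u : ℕ) - i = ((u : ℕ) - (i+1)) + 1 by omega)).symm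
    have h0 : f 0 = u := Fin.ext (show (u : ℕ) - 0 = (u : ℕ) by omega)
    have hkv : f k = v := Fin.ext (show (u : ℕ) - k = (v : ℕ) by omega)
    refine ⟨(buildWalk f k hadj).copy h0 hkv, ?_, ?_⟩
    · rw [Walk.isPath_copy]
      refine isPath_buildWalk f k hadj ?_
      intro i hi j hj hij
      have := congrArg (Fin.val) hij
      rw [hfi i, hfi j] at this
      omega
    · have hlen : ((buildWalk f k hadj).copy h0 hkv).length = k := by
        rw [Walk.length_copy, length_buildWalk]
      have hsup : ∀ i ≤ k,
          cvF n (((buildWalk f k hadj).copy h0 hkv).support.getD i u)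
            = ⟨2 * ((u : ℕ) - i) % 3, by omega⟩ := by
        intro i hi
        rw [Walk.support_copy, support_buildWalk, getD_map_range _ _ _ (by omega)]
        rfl
      have hedg : ∀ i < k,
          ceF n (((buildWalk f k hadj).copy h0 hkv).edges.getD i s(u, u))
            = ⟨(2 * ((u : ℕ) - (i+1)) + 1) % 3, by omega⟩ := by
        intro i hi
        rw [Walk.edges_copy, edges_buildWalk, getD_map_range _ _ _ hi]
        rw [Sym2.eq_swap]
        rw [ceF_eval (f (i+1)) (f i)
          (show (u : ℕ) - i = ((u : ℕ) - (i+1)) + 1 by omega)]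
      refine ⟨?_, ?_, ?_⟩
      · intro i hi
        rw [hlen] at hi
        rw [hedg i (by omega), hedg (i+1) (by omega)]
        simp only [ne_eq, Fin.mk.injEq]
        omega
      · intro i h1 hi
        rw [hlen] at hi
        rw [hsup i (by omega), hsup (i+1) (by omega)]
        simp only [ne_eq, Fin.mk.injEq]
        omega
      · intro i h1 hi
        rw [hlen] at hi
        rw [hsup i (by omega), hedg (i-1) (by omega), hedg i (by omega)]
        constructor <;> (simp only [ne_eq, Fin.mk.injEq]; omega)

lemma three_le {n k : ℕ} (hn : 4 ≤ n) (cv : Fin n → Fin k) (ce : Sym2 (Fin n) → Fin k)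
    (h : TotalProperConnected (cycleGraph n) cv ce) : 3 ≤ k := by
  obtain ⟨w, hp, h1, h2, h3⟩ := h ⟨0, by omega⟩ ⟨2, by omega⟩
  have hlen : 2 ≤ w.length := by
    rcases Nat.lt_or_ge w.length 2 with hc | hc
    · have h01 : w.length = 0 ∨ w.length = 1 := by omega
      rcases h01 with hl | hl
      · have := w.eq_of_length_eq_zero hl
        simp [Fin.ext_iff] at this
      · have hadj := w.adj_of_length_eq_one hl
        rw [cycleGraph_adj'] at hadj
        have e1 : (((⟨0, by omega⟩ : Fin n) - ⟨2, by omega⟩) : Fin n).val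
            = ((n - 2) + 0) % n := by rw [Fin.sub_def]
        have e2 : (((⟨2, by omega⟩ : Fin n) - ⟨0, by omega⟩) : Fin n).val
            = ((n - 0) + 2) % n := by rw [Fin.sub_def]
        rcases hadj with hadj | hadj
        · rw [e1, Nat.mod_eq_of_lt (by omega)] at hadj; omega
        · rw [e2] at hadj
          have : (n - 0) + 2 = n + 2 := by omega
          rw [this, Nat.add_mod_left, Nat.mod_eq_of_lt (by omega)] at hadj
          omega
    · exact hc
  have hab := h1 0 (by omega)
  have hca := (h3 1 le_rfl (by omega)).1
  have hcb := (h3 1 le_rfl (by omega)).2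
  have v1 : (ce (w.edges.getD 0 s(⟨0, by omega⟩, ⟨0, by omega⟩)) : ℕ)
      ≠ (ce (w.edges.getD 1 s(⟨0, by omega⟩, ⟨0, by omega⟩)) : ℕ) :=
    fun hh => hab (Fin.ext hh)
  have v2 : (cv (w.support.getD 1 ⟨0, by omega⟩) : ℕ)
      ≠ (ce (w.edges.getD 0 s(⟨0, by omega⟩, ⟨0, by omega⟩)) : ℕ) :=
    fun hh => hca (Fin.ext hh)
  have v3 : (cv (w.support.getD 1 ⟨0, by omega⟩) : ℕ)
      ≠ (ce (w.edges.getD 1 s(⟨0, by omega⟩, ⟨0, by omega⟩)) : ℕ) :=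
    fun hh => hcb (Fin.ext hh)
  have w1 := (ce (w.edges.getD 0 s((⟨0, by omega⟩ : Fin n), ⟨0, by omega⟩))).isLt
  have w2 := (ce (w.edges.getD 1 s((⟨0, by omega⟩ : Fin n), ⟨0, by omega⟩))).isLt
  have w3 := (cv (w.support.getD 1 ⟨0, by omega⟩)).isLt
  omega

lemma c3_mem : TotalProperConnected (cycleGraph 3) (fun _ => (0 : Fin 1)) (fun _ => 0) := by
  intro u v
  by_cases huv : u = v
  · subst huv
    refine ⟨Walk.nil, Walk.IsPath.nil, ?_, ?_, ?_⟩ <;>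
      · intro i hi
        simp only [Walk.length_nil] at *
        omega
  · have hadj : (cycleGraph 3).Adj u v := by
      rw [cycleGraph_three_eq_top, top_adj]
      exact huv
    refine ⟨Walk.cons hadj Walk.nil, ?_, ?_, ?_, ?_⟩
    · rw [Walk.isPath_def]
      simp [huv]
    all_goals
      intro i hi
      simp only [Walk.length_cons, Walk.length_nil] at *
      omega

end TPCAux

open TPCAux in
/-- For the cycle `C_n` with `n ≥ 4` vertices, `tpc (C_n) = 3`; and `tpc (C_3) = 1`. -/
theorem stmt_10 (n : ℕ) (hn : 4 ≤ n) :
    tpc (SimpleGraph.cycleGraph n) = 3 ∧ tpc (SimpleGraph.cycleGraph 3) = 1 := by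
  constructor
  · apply le_antisymm
    · exact Nat.sInf_le ⟨cvF n, ceF n, three_mem hn⟩
    · refine le_csInf ⟨3, cvF n, ceF n, three_mem hn⟩ ?_
      rintro m ⟨cv, ce, h⟩
      exact three_le hn cv ce h
  · apply le_antisymm
    · exact Nat.sInf_le ⟨fun _ => 0, fun _ => 0, c3_mem⟩
    · refine le_csInf ⟨1, fun _ => 0, fun _ => 0, c3_mem⟩ ?_
      rintro m ⟨cv, ce, h⟩
      rcases Nat.eq_zero_or_pos m with rfl | h1
      · exact (cv ⟨0, by omega⟩).elim0
      · exact h1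
end

section
/- Let C_n = v_1 v_2 … v_n v_1 be a cycle, with indices read modulo n. Suppose there exists a total coloring of C_n with three colors such that both of the following are total proper paths: the path v_j v_{j+1} … v_{i-1} v_i and the path v_l v_{l+1} … v_{k-1} v_k (traversing the cycle with indices increasing modulo n), where 1 ≤ i < j < k < l ≤ n, |i − l| > 1 and |k − j| > 1. Then 3 divides n. -/
/-- On the cycle `C_n` with vertices `v_t = (t : ZMod n)` and edges `v_t v_{t+1}`, given a
total coloring (`cv t` the color of the vertex `v_t`, `ce t` the color of the edge
`v_t v_{t+1}`), the arc starting at `v_a` and traversing `m` edges with increasing indices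
(vertices `v_a, v_{a+1}, …, v_{a+m}`) is a *total proper path* if (i) any two adjacent
edges on it differ in color, (ii) any two internal adjacent vertices on it differ in
color, and (iii) any internal vertex differs in color from its two incident edges. -/
def TotalProperArc (n : ℕ) (cv ce : ZMod n → Fin 3) (a m : ℕ) : Prop :=
  (∀ t : ℕ, t + 1 < m →
      ce ((a : ZMod n) + (t : ℕ)) ≠ ce ((a : ZMod n) + ((t + 1 : ℕ) : ZMod n))) ∧
  (∀ t : ℕ, 1 ≤ t → t + 1 < m →
      cv ((a : ZMod n) + (t : ℕ)) ≠ cv ((a : ZMod n) + ((t + 1 : ℕ) : ZMod n))) ∧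
  (∀ t : ℕ, 1 ≤ t → t < m →
      cv ((a : ZMod n) + (t : ℕ)) ≠ ce ((a : ZMod n) + ((t - 1 : ℕ) : ZMod n)) ∧
      cv ((a : ZMod n) + (t : ℕ)) ≠ ce ((a : ZMod n) + (t : ℕ)))

lemma fin3_third : ∀ a b x y : Fin 3, a ≠ b → x ≠ a → x ≠ b → y ≠ a → y ≠ b → x = y := by
  decide

lemma rainbow3 {m : ℕ} {c v : ℕ → Fin 3}
    (hE : ∀ t, t + 1 < m → c t ≠ c (t + 1))
    (hV : ∀ t, 1 ≤ t → t + 1 < m → v t ≠ v (t + 1))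
    (hVE : ∀ t, 1 ≤ t → t < m → v t ≠ c (t - 1) ∧ v t ≠ c t) :
    ∀ t, t + 2 < m → c t ≠ c (t + 2) := by
  intro t ht hcontra
  have h1 := hVE (t + 1) (by omega) (by omega)
  have h2 := hVE (t + 2) (by omega) (by omega)
  have h3 := hV (t + 1) (by omega) (by omega)
  have e1 : t + 1 - 1 = t := by omega
  have e2 : t + 2 - 1 = t + 1 := by omega
  rw [e1] at h1
  rw [e2] at h2
  exact h3 (fin3_third (c (t + 1)) (c t) (v (t + 1)) (v (t + 2))
    (Ne.symm (hE t (by omega))) h1.2 h1.1 h2.1 (fun h => h2.2 (h.trans hcontra)))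

lemma period3 {m : ℕ} {c : ℕ → Fin 3}
    (hE : ∀ t, t + 1 < m → c t ≠ c (t + 1))
    (hR : ∀ t, t + 2 < m → c t ≠ c (t + 2)) :
    ∀ t, t + 3 < m → c (t + 3) = c t := by
  intro t ht
  exact fin3_third (c (t + 1)) (c (t + 2)) (c (t + 3)) (c t)
    (hE (t + 1) (by omega)) (Ne.symm (hR (t + 1) (by omega)))
    (Ne.symm (hE (t + 2) (by omega))) (hE t (by omega)) (hR t (by omega))

lemma periodMod {m : ℕ} {c : ℕ → Fin 3}
    (hP : ∀ t, t + 3 < m → c (t + 3) = c t) :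
    ∀ t, t < m → c t = c (t % 3) := by
  intro t
  induction t using Nat.strong_induction_on with
  | _ t ih =>
    intro ht
    by_cases h : t < 3
    · interval_cases t <;> rfl
    · have h3 : t - 3 + 3 = t := by omega
      have e1 : c t = c (t - 3) := by
        have := hP (t - 3) (by omega)
        rw [h3] at this
        exact this
      have e2 : (t - 3) % 3 = t % 3 := by omega
      rw [e1, ih (t - 3) (by omega) (by omega), e2]

/-- If a total coloring of `C_n` with three colors makes both the arc
`v_j v_{j+1} … v_i` and the arc `v_l v_{l+1} … v_k` (indices increasing modulo `n`)
total proper paths, where `1 ≤ i < j < k < l ≤ n`, `|i - l| > 1` and `|k - j| > 1`,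
then `3 ∣ n`. -/
theorem stmt_13 (n i j k l : ℕ)
    (hi : 1 ≤ i) (hij : i < j) (hjk : j < k) (hkl : k < l) (hln : l ≤ n)
    (hil : 1 < l - i) (hkj : 1 < k - j)
    (cv ce : ZMod n → Fin 3)
    (hP1 : TotalProperArc n cv ce j (n - j + i))
    (hP2 : TotalProperArc n cv ce l (n - l + k)) :
    3 ∣ n := by
  obtain ⟨hE1', hV1', hVE1'⟩ := hP1
  obtain ⟨hE2', hV2', hVE2'⟩ := hP2
  set m1 := n - j + i with hm1def
  set m2 := n - l + k with hm2def
  set c1 : ℕ → Fin 3 := fun t => ce ((j : ZMod n) + (t : ℕ)) with hc1def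
  set v1 : ℕ → Fin 3 := fun t => cv ((j : ZMod n) + (t : ℕ)) with hv1def
  set c2 : ℕ → Fin 3 := fun t => ce ((l : ZMod n) + (t : ℕ)) with hc2def
  set v2 : ℕ → Fin 3 := fun t => cv ((l : ZMod n) + (t : ℕ)) with hv2def
  have hE1 : ∀ t, t + 1 < m1 → c1 t ≠ c1 (t + 1) := hE1'
  have hV1 : ∀ t, 1 ≤ t → t + 1 < m1 → v1 t ≠ v1 (t + 1) := hV1'
  have hVE1 : ∀ t, 1 ≤ t → t < m1 → v1 t ≠ c1 (t - 1) ∧ v1 t ≠ c1 t := hVE1'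
  have hE2 : ∀ t, t + 1 < m2 → c2 t ≠ c2 (t + 1) := hE2'
  have hV2 : ∀ t, 1 ≤ t → t + 1 < m2 → v2 t ≠ v2 (t + 1) := hV2'
  have hVE2 : ∀ t, 1 ≤ t → t < m2 → v2 t ≠ c2 (t - 1) ∧ v2 t ≠ c2 t := hVE2'
  have hR1 := rainbow3 hE1 hV1 hVE1
  have hR2 := rainbow3 hE2 hV2 hVE2
  have per1 := periodMod (period3 hE1 hR1)
  have per2 := periodMod (period3 hE2 hR2)
  have hm1 : 4 ≤ m1 := by omega
  have hm2 : 4 ≤ m2 := by omega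
  -- agreements between the two arcs
  set s0 := n - l + j with hs0def
  have key : ∀ t : ℕ, c1 t = c2 (s0 + t) := by
    intro t
    have hcast : (l : ZMod n) + ((s0 + t : ℕ) : ZMod n) = (j : ZMod n) + (t : ℕ) := by
      rw [hs0def]
      push_cast [Nat.cast_sub hln]
      rw [ZMod.natCast_self]
      ring
    simp only [hc1def, hc2def, hcast]
  have agree2 : c1 (l - j) = c2 0 := by
    have hcast : (j : ZMod n) + ((l - j : ℕ) : ZMod n) = (l : ZMod n) + ((0 : ℕ) : ZMod n) := by
      rw [Nat.cast_sub (by omega : j ≤ l)]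
      push_cast
      ring
    simp only [hc1def, hc2def, hcast]
  -- c2 is injective on {0,1,2}
  have i01 : c2 0 ≠ c2 1 := hE2 0 (by omega)
  have i12 : c2 1 ≠ c2 2 := hE2 1 (by omega)
  have i02 : c2 0 ≠ c2 2 := hR2 0 (by omega)
  -- pattern: c1 t = c2 ((s0 + t) % 3) for t = 0, 1, 2
  have p0 : c1 0 = c2 (s0 % 3) := by
    rw [key 0, per2 (s0 + 0) (by omega)]
    congr 1
  have p1 : c1 1 = c2 ((s0 + 1) % 3) := by
    rw [key 1, per2 (s0 + 1) (by omega)]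
  have inj2 : ∀ x y : ℕ, x < 3 → y < 3 → c2 x = c2 y → x = y := by
    intro x y hx hy hxy
    interval_cases x <;> interval_cases y <;>
      first
        | rfl
        | exact absurd hxy i01
        | exact absurd hxy i12
        | exact absurd hxy i02
        | exact absurd hxy.symm i01
        | exact absurd hxy.symm i12
        | exact absurd hxy.symm i02
  have p2 : c1 2 = c2 ((s0 + 2) % 3) := by
    have d01 : c1 0 ≠ c1 1 := hE1 0 (by omega)
    have d02 : c1 0 ≠ c1 2 := hR1 0 (by omega)
    have d12 : c1 1 ≠ c1 2 := hE1 1 (by omega)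
    have hy1 : c2 ((s0 + 2) % 3) ≠ c2 (s0 % 3) := fun h => by
      have := inj2 _ _ (by omega) (by omega) h; omega
    have hy2 : c2 ((s0 + 2) % 3) ≠ c2 ((s0 + 1) % 3) := fun h => by
      have := inj2 _ _ (by omega) (by omega) h; omega
    rw [p0] at d02
    rw [p1] at d12
    exact (fin3_third (c2 (s0 % 3)) (c2 ((s0 + 1) % 3)) (c2 ((s0 + 2) % 3)) (c1 2)
      (by rw [← p0, ← p1]; exact d01) hy1 hy2
      (Ne.symm d02) (Ne.symm d12)).symm
  -- finish
  set t0 := l - j with ht0def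
  have hst : s0 + t0 = n := by omega
  have ht0m1 : t0 < m1 := by omega
  have hchain : c2 0 = c2 (n % 3) := by
    rw [← agree2, per1 t0 ht0m1]
    rcases (show t0 % 3 = 0 ∨ t0 % 3 = 1 ∨ t0 % 3 = 2 by omega) with h | h | h
    · rw [h, p0]; congr 1; omega
    · rw [h, p1]; congr 1; omega
    · rw [h, p2]; congr 1; omega
  rcases (show n % 3 = 0 ∨ n % 3 = 1 ∨ n % 3 = 2 by omega) with h | h | h
  · omega
  · rw [h] at hchain; exact absurd hchain i01
  · rw [h] at hchain; exact absurd hchain i02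
end

section
/- Every connected graph G of order n ≥ 4 and minimum degree δ has a connected two-way two-step dominating set D of size at most 3n/(δ+1) − 2. -/
open SimpleGraph

/-- The distance from a vertex `v` to a set `D` of vertices: the minimum over `u ∈ D`
of the graph distance from `u` to `v`. -/
noncomputable def setDist {V : Type*} (G : SimpleGraph V) (D : Set V) (v : V) : ℕ :=
  sInf {d | ∃ u ∈ D, G.dist u v = d}

namespace Aux16

variable {V : Type*} {G : SimpleGraph V} {D : Set V} {u v x : V}

lemma exists_setDist (hD : D.Nonempty) (v : V) :
    ∃ u ∈ D, G.dist u v = setDist G D v := by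
  have hne : {d | ∃ u ∈ D, G.dist u v = d}.Nonempty := ⟨_, hD.choose, hD.choose_spec, rfl⟩
  exact Nat.sInf_mem hne

lemma setDist_le (hu : u ∈ D) (v : V) : setDist G D v ≤ G.dist u v :=
  Nat.sInf_le ⟨u, hu, rfl⟩

lemma setDist_eq_zero (hv : v ∈ D) : setDist G D v = 0 :=
  Nat.le_zero.mp <| (setDist_le hv v).trans (by simp [SimpleGraph.dist_self])

lemma mem_of_setDist_eq_zero (hG : G.Connected) (hD : D.Nonempty)
    (h : setDist G D v = 0) : v ∈ D := by
  obtain ⟨u, hu, hud⟩ := exists_setDist (G := G) hD v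
  rw [h] at hud
  rwa [← hG.dist_eq_zero_iff.mp hud]

lemma setDist_mono {D' : Set V} (h : D ⊆ D') (hD : D.Nonempty) (v : V) :
    setDist G D' v ≤ setDist G D v := by
  obtain ⟨u, hu, hud⟩ := exists_setDist (G := G) hD v
  exact hud ▸ setDist_le (h hu) v

lemma setDist_triangle (hG : G.Connected) (hD : D.Nonempty) (a b : V) :
    setDist G D b ≤ setDist G D a + G.dist a b := by
  obtain ⟨u, hu, hud⟩ := exists_setDist (G := G) hD a
  calc setDist G D b ≤ G.dist u b := setDist_le hu b
    _ ≤ G.dist u a + G.dist a b := hG.dist_triangle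
    _ = setDist G D a + G.dist a b := by rw [hud]

lemma setDist_adj (hG : G.Connected) (hD : D.Nonempty) (h : G.Adj a b) :
    setDist G D b ≤ setDist G D a + 1 := by
  have := setDist_triangle (G := G) hG hD a b
  rwa [SimpleGraph.dist_eq_one_iff_adj.mpr h] at this

lemma dist_getVert_le (hG : G.Connected) {u v : V} (p : G.Walk u v) (k : ℕ) :
    G.dist u (p.getVert k) ≤ k := by
  induction p generalizing k with
  | nil => simp [SimpleGraph.Walk.getVert, SimpleGraph.dist_self]
  | @cons a b c h q ih =>
    cases k with
    | zero => simp [SimpleGraph.Walk.getVert, SimpleGraph.dist_self]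
    | succ k =>
      show G.dist a (q.getVert k) ≤ k + 1
      calc G.dist a (q.getVert k) ≤ G.dist a b + G.dist b (q.getVert k) := hG.dist_triangle
        _ ≤ 1 + k := by
            have h1 : G.dist a b = 1 := SimpleGraph.dist_eq_one_iff_adj.mpr h
            have := ih k
            omega
        _ = k + 1 := by omega

lemma dist_getVert_right {u v : V} (p : G.Walk u v) (k : ℕ) :
    G.dist (p.getVert k) v ≤ p.length - k := by
  induction p generalizing k with
  | nil => simp [SimpleGraph.Walk.getVert, SimpleGraph.dist_self]
  | @cons a b c h q ih =>
    cases k with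
    | zero =>
      show G.dist a c ≤ (q.length + 1) - 0
      simpa using SimpleGraph.dist_le (SimpleGraph.Walk.cons h q)
    | succ k =>
      show G.dist (q.getVert k) c ≤ (q.length + 1) - (k + 1)
      simpa [Nat.succ_sub_succ] using ih k

lemma all_le_two (hG : G.Connected) (hD : D.Nonempty)
    (h3 : ∀ w : V, setDist G D w ≠ 3) (v : V) : setDist G D v ≤ 2 := by
  by_contra hlt
  push_neg at hlt
  set d := setDist G D v with hd
  have hd3 : 3 ≤ d := hlt
  obtain ⟨u, hu, hud⟩ := exists_setDist (G := G) hD v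
  obtain ⟨p, hp⟩ := (hG u v).exists_walk_length_eq_dist
  set x := p.getVert 3 with hx
  have h1 : setDist G D x ≤ 3 := (setDist_le hu x).trans (dist_getVert_le hG p 3)
  have h2 : G.dist x v ≤ d - 3 := by
    have := dist_getVert_right (G := G) p 3
    rwa [hp, hud] at this
  have h4 : d ≤ setDist G D x + (d - 3) := by
    have := setDist_triangle (G := G) hG hD x v
    rw [← hd] at this
    omega
  have : setDist G D x = 3 := by omega
  exact h3 x this

lemma induce_connected_insert (hD : (G.induce D).Connected) (hu : u ∈ D)
    (hadj : G.Adj u x) : (G.induce (insert x D)).Connected := by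
  rw [SimpleGraph.connected_iff]
  refine ⟨?_, ⟨⟨x, Set.mem_insert _ _⟩⟩⟩
  let f : G.induce D →g G.induce (insert x D) :=
    ⟨fun a => ⟨a.1, Set.mem_insert_of_mem _ a.2⟩, fun {a b} hab => hab⟩
  have key : ∀ c : (insert x D : Set V),
      (G.induce (insert x D)).Reachable c ⟨u, Set.mem_insert_of_mem _ hu⟩ := by
    rintro ⟨c, hc⟩
    rcases Set.mem_insert_iff.mp hc with rfl | hcD
    · exact (show (G.induce (insert c D)).Adj ⟨c, hc⟩ ⟨u, Set.mem_insert_of_mem _ hu⟩ from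
        hadj.symm).reachable
    · have h := SimpleGraph.Reachable.map f (hD.preconnected ⟨c, hcD⟩ ⟨u, hu⟩)
      convert h using 2 <;> rfl
  intro a b
  exact (key a).trans (key b).symm

lemma induce_singleton_connected (u : V) : (G.induce ({u} : Set V)).Connected := by
  rw [SimpleGraph.connected_iff]
  refine ⟨?_, ⟨⟨u, rfl⟩⟩⟩
  rintro ⟨a, ha⟩ ⟨b, hb⟩
  rcases ha; rcases hb
  exact SimpleGraph.Reachable.refl _

variable [Fintype V]

lemma grow (hG : G.Connected) (δ : ℕ) (hδ : ∀ v : V, δ ≤ (G.neighborSet v).ncard)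
    (hδ2 : 2 ≤ δ) :
    ∀ (m : ℕ) (D U : Set V) (k1 k2 : ℕ), (Dᶜ).ncard ≤ m →
    D.Nonempty → (G.induce D).Connected →
    (∀ x ∈ U, setDist G D x ≤ 1) →
    (δ + 1) * k1 + δ * k2 ≤ U.ncard →
    D.ncard + 2 ≤ 3 * k1 + 2 * k2 →
    ∃ (D' : Set V) (k1' k2' : ℕ),
      (∀ v : V, setDist G D' v ≤ 2) ∧
      (∀ v : V, setDist G D' v = 2 → 2 ≤ {w : V | G.Adj v w ∧ setDist G D' w = 1}.ncard) ∧
      (G.induce D').Connected ∧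
      D'.ncard + 2 ≤ 3 * k1' + 2 * k2' ∧
      (δ + 1) * k1' + δ * k2' ≤ Fintype.card V := by
  intro m
  induction m with
  | zero =>
    intro D U k1 k2 hm hD hconn hU hcard hsize
    have hDuniv : D = Set.univ := by
      have : (Dᶜ).ncard = 0 := Nat.le_zero.mp hm
      have : Dᶜ = ∅ := (Set.ncard_eq_zero (Set.toFinite _)).mp this
      rw [← Set.compl_empty, ← this, compl_compl]
    subst hDuniv
    refine ⟨Set.univ, k1, k2, ?_, ?_, hconn, hsize, ?_⟩
    · intro v; rw [setDist_eq_zero (Set.mem_univ v)]; omega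
    · intro v hv; rw [setDist_eq_zero (Set.mem_univ v)] at hv; omega
    · calc (δ + 1) * k1 + δ * k2 ≤ U.ncard := hcard
        _ ≤ (Set.univ : Set V).ncard := Set.ncard_le_ncard (Set.subset_univ _) (Set.toFinite _)
        _ = Fintype.card V := by rw [Set.ncard_univ, Nat.card_eq_fintype_card]
  | succ m ih =>
    intro D U k1 k2 hm hD hconn hU hcard hsize
    by_cases h3 : ∃ v : V, setDist G D v = 3
    · -- Phase 1 step: extend along a path of length 3
      obtain ⟨v, hv3⟩ := h3
      obtain ⟨u, hu, hud⟩ := exists_setDist (G := G) hD v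
      rw [hv3] at hud
      obtain ⟨p, hp⟩ := (hG u v).exists_walk_length_eq_dist
      rw [hud] at hp
      set p1 := p.getVert 1 with hp1
      set p2 := p.getVert 2 with hp2
      have a01 : G.Adj u p1 := by
        have := p.adj_getVert_succ (i := 0) (by omega)
        rwa [p.getVert_zero] at this
      have a12 : G.Adj p1 p2 := p.adj_getVert_succ (i := 1) (by omega)
      have a23 : G.Adj p2 v := by
        have := p.adj_getVert_succ (i := 2) (by omega)
        have h3' : p.getVert 3 = v := by
          have := p.getVert_length
          rwa [hp] at this
        rwa [h3'] at this
      have hd2v : G.dist p2 v = 1 := SimpleGraph.dist_eq_one_iff_adj.mpr a23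
      have hd12 : G.dist p1 p2 = 1 := SimpleGraph.dist_eq_one_iff_adj.mpr a12
      have sd1 : setDist G D p1 = 1 := by
        have hle : setDist G D p1 ≤ 1 :=
          (setDist_le hu p1).trans (by simpa using dist_getVert_le hG p 1)
        have hge : 3 ≤ setDist G D p1 + 2 := by
          have ht := setDist_triangle (G := G) hG hD p1 v
          have hpv : G.dist p1 v ≤ 2 := by
            calc G.dist p1 v ≤ G.dist p1 p2 + G.dist p2 v := hG.dist_triangle
              _ = 2 := by rw [hd2v, hd12]
          omega
        omega
      have sd2 : setDist G D p2 = 2 := by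
        have hle : setDist G D p2 ≤ 2 :=
          (setDist_le hu p2).trans (by simpa using dist_getVert_le hG p 2)
        have hge : 3 ≤ setDist G D p2 + 1 := by
          have ht := setDist_triangle (G := G) hG hD p2 v
          omega
        omega
      have hp1D : p1 ∉ D := fun h => by rw [setDist_eq_zero h] at sd1; omega
      have hp2D : p2 ∉ D := fun h => by rw [setDist_eq_zero h] at sd2; omega
      have hvD : v ∉ D := fun h => by rw [setDist_eq_zero h] at hv3; omega
      have hne12 : p2 ≠ p1 := fun h => by rw [h, sd1] at sd2; omega
      have hnev1 : v ≠ p1 := fun h => by rw [h, sd1] at hv3; omega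
      have hnev2 : v ≠ p2 := fun h => by rw [h, sd2] at hv3; omega
      set D' := insert v (insert p2 (insert p1 D)) with hD'
      have hsub : D ⊆ D' := by
        intro a ha
        exact Set.mem_insert_of_mem _ (Set.mem_insert_of_mem _ (Set.mem_insert_of_mem _ ha))
      have hvD' : v ∈ D' := Set.mem_insert _ _
      have hconn' : (G.induce D').Connected := by
        apply induce_connected_insert (x := v)
          (induce_connected_insert (x := p2)
            (induce_connected_insert (x := p1) hconn hu a01)
            (Set.mem_insert _ _) a12)
          (Set.mem_insert _ _) a23
      have hcardD' : D'.ncard = D.ncard + 3 := by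
        have hm2 : p2 ∉ insert p1 D := by
          simp only [Set.mem_insert_iff]
          push_neg
          exact ⟨hne12, hp2D⟩
        have hmv : v ∉ insert p2 (insert p1 D) := by
          simp only [Set.mem_insert_iff]
          push_neg
          exact ⟨hnev2, hnev1, hvD⟩
        rw [hD', Set.ncard_insert_of_notMem hmv, Set.ncard_insert_of_notMem hm2,
          Set.ncard_insert_of_notMem hp1D]
      -- new credit ball
      set B := insert v (G.neighborSet v) with hB
      have hBfar : ∀ y ∈ B, 2 ≤ setDist G D y := by
        intro y hy
        rcases Set.mem_insert_iff.mp hy with rfl | hy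
        · omega
        · have hadj : G.Adj y v := ((SimpleGraph.mem_neighborSet G v y).mp hy).symm
          have := setDist_adj (G := G) hG hD hadj
          omega
      have hdisj : Disjoint U B := by
        rw [Set.disjoint_left]
        intro y hyU hyB
        have h1 := hU y hyU
        have h2 := hBfar y hyB
        omega
      have hBcard : δ + 1 ≤ B.ncard := by
        rw [hB, Set.ncard_insert_of_notMem (by simp)]
        have := hδ v
        omega
      set U' := U ∪ B with hU'
      have hcardU' : U.ncard + B.ncard = U'.ncard :=
        (Set.ncard_union_eq hdisj (Set.toFinite _) (Set.toFinite _)).symm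
      have hD'ne : D'.Nonempty := ⟨v, hvD'⟩
      have hU'prop : ∀ x ∈ U', setDist G D' x ≤ 1 := by
        intro y hy
        rcases hy with hy | hy
        · exact (setDist_mono hsub hD y).trans (hU y hy)
        · rcases Set.mem_insert_iff.mp hy with rfl | hy
          · rw [setDist_eq_zero hvD']; omega
          · have hadj : G.Adj v y := (SimpleGraph.mem_neighborSet G v y).mp hy
            calc setDist G D' y ≤ G.dist v y := setDist_le hvD' y
              _ = 1 := SimpleGraph.dist_eq_one_iff_adj.mpr hadj
      have hmeas : (D'ᶜ).ncard ≤ m := by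
        have hss : D'ᶜ ⊂ Dᶜ := by
          constructor
          · exact Set.compl_subset_compl.mpr hsub
          · intro hsub2
            exact (hsub2 hvD : (v ∈ D'ᶜ)) hvD'
        have := Set.ncard_lt_ncard hss (Set.toFinite _)
        omega
      apply ih D' U' (k1 + 1) k2 hmeas hD'ne hconn' hU'prop
      · calc (δ + 1) * (k1 + 1) + δ * k2 = ((δ + 1) * k1 + δ * k2) + (δ + 1) := by ring
          _ ≤ U.ncard + B.ncard := by omega
          _ = U'.ncard := hcardU'
      · omega
    · by_cases hbad : ∃ v : V, setDist G D v = 2 ∧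
          {w : V | G.Adj v w ∧ setDist G D w = 1}.ncard ≤ 1
      · -- Phase 2 step: fix a bad vertex
        obtain ⟨v, hv2, hfew⟩ := hbad
        obtain ⟨u, hu, hud⟩ := exists_setDist (G := G) hD v
        rw [hv2] at hud
        obtain ⟨p, hp⟩ := (hG u v).exists_walk_length_eq_dist
        rw [hud] at hp
        set w := p.getVert 1 with hw
        have a01 : G.Adj u w := by
          have := p.adj_getVert_succ (i := 0) (by omega)
          rwa [p.getVert_zero] at this
        have a1v : G.Adj w v := by
          have := p.adj_getVert_succ (i := 1) (by omega)
          have h2' : p.getVert 2 = v := by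
            have := p.getVert_length
            rwa [hp] at this
          rwa [h2'] at this
        have sdw : setDist G D w = 1 := by
          have hle : setDist G D w ≤ 1 :=
            (setDist_le hu w).trans (by simpa using dist_getVert_le hG p 1)
          have hge : 2 ≤ setDist G D w + 1 := by
            have ht := setDist_triangle (G := G) hG hD w v
            rw [SimpleGraph.dist_eq_one_iff_adj.mpr a1v] at ht
            omega
          omega
        have hwmem : w ∈ {y : V | G.Adj v y ∧ setDist G D y = 1} := ⟨a1v.symm, sdw⟩
        have huniq : ∀ y : V, G.Adj v y → setDist G D y = 1 → y = w := by
          intro y hy1 hy2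
          have := (Set.ncard_le_one (Set.toFinite _)).mp hfew
          exact this y ⟨hy1, hy2⟩ w hwmem
        have hwD : w ∉ D := fun h => by rw [setDist_eq_zero h] at sdw; omega
        have hvD : v ∉ D := fun h => by rw [setDist_eq_zero h] at hv2; omega
        have hnevw : v ≠ w := fun h => by rw [h, sdw] at hv2; omega
        set D' := insert v (insert w D) with hD'
        have hsub : D ⊆ D' := fun a ha =>
          Set.mem_insert_of_mem _ (Set.mem_insert_of_mem _ ha)
        have hvD' : v ∈ D' := Set.mem_insert _ _
        have hconn' : (G.induce D').Connected :=
          induce_connected_insert (x := v)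
            (induce_connected_insert (x := w) hconn hu a01)
            (Set.mem_insert _ _) a1v
        have hcardD' : D'.ncard = D.ncard + 2 := by
          have hmv : v ∉ insert w D := by
            simp only [Set.mem_insert_iff]
            push_neg
            exact ⟨hnevw, hvD⟩
          rw [hD', Set.ncard_insert_of_notMem hmv, Set.ncard_insert_of_notMem hwD]
        -- new credit ball
        set B := insert v (G.neighborSet v \ {w}) with hB
        have hBfar : ∀ y ∈ B, setDist G D y = 2 := by
          intro y hy
          rcases Set.mem_insert_iff.mp hy with rfl | hy
          · exact hv2
          · obtain ⟨hy1, hy2⟩ := hy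
            have hadjvy : G.Adj v y := (SimpleGraph.mem_neighborSet G v y).mp hy1
            have hle2 : setDist G D y ≤ 2 := by
              push_neg at h3
              exact all_le_two hG hD h3 y
            have hyD : y ∉ D := by
              intro hyD
              have : setDist G D v ≤ G.dist y v := setDist_le hyD v
              rw [SimpleGraph.dist_eq_one_iff_adj.mpr hadjvy.symm] at this
              omega
            have hne0 : setDist G D y ≠ 0 := fun h =>
              hyD (mem_of_setDist_eq_zero hG hD h)
            have hne1 : setDist G D y ≠ 1 := by
              intro h1
              exact hy2 (huniq y hadjvy h1)
            omega
        have hdisj : Disjoint U B := by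
          rw [Set.disjoint_left]
          intro y hyU hyB
          have h1 := hU y hyU
          have h2 := hBfar y hyB
          omega
        have hBcard : δ ≤ B.ncard := by
          have hvnot : v ∉ G.neighborSet v \ {w} := by simp
          rw [hB, Set.ncard_insert_of_notMem hvnot]
          have hδv := hδ v
          have : (G.neighborSet v).ncard ≤ (G.neighborSet v \ {w}).ncard + 1 := by
            have hsub2 : G.neighborSet v ⊆ (G.neighborSet v \ {w}) ∪ {w} := by
              intro z hz
              by_cases hzw : z = w
              · exact Or.inr hzw
              · exact Or.inl ⟨hz, hzw⟩
            calc (G.neighborSet v).ncard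
                ≤ ((G.neighborSet v \ {w}) ∪ {w}).ncard :=
                  Set.ncard_le_ncard hsub2 (Set.toFinite _)
              _ ≤ (G.neighborSet v \ {w}).ncard + ({w} : Set V).ncard :=
                  Set.ncard_union_le _ _
              _ = (G.neighborSet v \ {w}).ncard + 1 := by rw [Set.ncard_singleton]
          omega
        set U' := U ∪ B with hU'
        have hcardU' : U.ncard + B.ncard = U'.ncard :=
          (Set.ncard_union_eq hdisj (Set.toFinite _) (Set.toFinite _)).symm
        have hD'ne : D'.Nonempty := ⟨v, hvD'⟩
        have hU'prop : ∀ x ∈ U', setDist G D' x ≤ 1 := by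
          intro y hy
          rcases hy with hy | hy
          · exact (setDist_mono hsub hD y).trans (hU y hy)
          · rcases Set.mem_insert_iff.mp hy with rfl | hy
            · rw [setDist_eq_zero hvD']; omega
            · have hadj : G.Adj v y := (SimpleGraph.mem_neighborSet G v y).mp hy.1
              calc setDist G D' y ≤ G.dist v y := setDist_le hvD' y
                _ = 1 := SimpleGraph.dist_eq_one_iff_adj.mpr hadj
        have hmeas : (D'ᶜ).ncard ≤ m := by
          have hss : D'ᶜ ⊂ Dᶜ := by
            constructor
            · exact Set.compl_subset_compl.mpr hsub
            · intro hsub2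
              exact (hsub2 hvD : (v ∈ D'ᶜ)) hvD'
          have := Set.ncard_lt_ncard hss (Set.toFinite _)
          omega
        apply ih D' U' k1 (k2 + 1) hmeas hD'ne hconn' hU'prop
        · calc (δ + 1) * k1 + δ * (k2 + 1) = ((δ + 1) * k1 + δ * k2) + δ := by ring
            _ ≤ U.ncard + B.ncard := by omega
            _ = U'.ncard := hcardU'
        · omega
      · -- Terminal case
        push_neg at h3
        push_neg at hbad
        refine ⟨D, k1, k2, all_le_two hG hD h3, ?_, hconn, hsize, ?_⟩
        · intro v hv
          have := hbad v hv
          omega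
        · calc (δ + 1) * k1 + δ * k2 ≤ U.ncard := hcard
            _ ≤ (Set.univ : Set V).ncard :=
              Set.ncard_le_ncard (Set.subset_univ _) (Set.toFinite _)
            _ = Fintype.card V := by rw [Set.ncard_univ, Nat.card_eq_fintype_card]

end Aux16

/-- Every connected graph of order `n ≥ 4` and minimum degree `δ` has a connected two-way
two-step dominating set of size at most `3n/(δ+1) - 2`. -/
theorem stmt_16 {V : Type*} [Fintype V] (G : SimpleGraph V) (hG : G.Connected)
    (hn : 4 ≤ Fintype.card V) (δ : ℕ) (hδ : ∀ v : V, δ ≤ (G.neighborSet v).ncard) :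
    ∃ D : Set V,
      -- `D` is a two-step dominating set:
      (∀ v : V, setDist G D v ≤ 2) ∧
      -- two-way (a): every pendant vertex belongs to `D`:
      (∀ v : V, (G.neighborSet v).ncard = 1 → v ∈ D) ∧
      -- two-way (b): every vertex of `N²(D)` has at least two neighbors in `N¹(D)`:
      (∀ v : V, setDist G D v = 2 → 2 ≤ {w : V | G.Adj v w ∧ setDist G D w = 1}.ncard) ∧
      -- `D` induces a connected subgraph:
      (G.induce D).Connected ∧
      -- size bound:
      (D.ncard : ℝ) ≤ 3 * (Fintype.card V : ℝ) / ((δ : ℝ) + 1) - 2 := by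
  have hδpos : (0 : ℝ) < (δ : ℝ) + 1 := by positivity
  by_cases hδ2 : 2 ≤ δ
  · -- main case
    have hne : Nonempty V := Fintype.card_pos_iff.mp (by omega)
    obtain ⟨u0⟩ := hne
    have hbase := Aux16.grow hG δ hδ hδ2 (Fintype.card V) {u0}
      (insert u0 (G.neighborSet u0)) 1 0
      (by
        calc (({u0} : Set V)ᶜ).ncard ≤ (Set.univ : Set V).ncard :=
            Set.ncard_le_ncard (Set.subset_univ _) (Set.toFinite _)
          _ = Fintype.card V := by rw [Set.ncard_univ, Nat.card_eq_fintype_card])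
      ⟨u0, rfl⟩ (Aux16.induce_singleton_connected u0)
      (by
        intro x hx
        rcases Set.mem_insert_iff.mp hx with h | hx
        · rw [Aux16.setDist_eq_zero (show x ∈ ({u0} : Set V) from h)]; omega
        · have hadj : G.Adj u0 x := (SimpleGraph.mem_neighborSet G u0 x).mp hx
          calc setDist G {u0} x ≤ G.dist u0 x := Aux16.setDist_le (Set.mem_singleton u0) x
            _ = 1 := SimpleGraph.dist_eq_one_iff_adj.mpr hadj)
      (by
        have h1 : u0 ∉ G.neighborSet u0 := by simp
        rw [Set.ncard_insert_of_notMem h1]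
        have := hδ u0
        omega)
      (by rw [Set.ncard_singleton])
    obtain ⟨D, k1, k2, hdom, htwo, hconn, hsize, hcount⟩ := hbase
    refine ⟨D, hdom, ?_, htwo, hconn, ?_⟩
    · intro v hv
      have := hδ v
      omega
    · have key : (D.ncard + 2) * (δ + 1) ≤ 3 * Fintype.card V := by
        have h1 : (D.ncard + 2) * (δ + 1) ≤ (3 * k1 + 2 * k2) * (δ + 1) :=
          Nat.mul_le_mul_right _ hsize
        have h2 : (3 * k1 + 2 * k2) * (δ + 1) ≤ 3 * ((δ + 1) * k1 + δ * k2) := by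
          have : 2 * (δ + 1) ≤ 3 * δ := by omega
          nlinarith
        have h3 : 3 * ((δ + 1) * k1 + δ * k2) ≤ 3 * Fintype.card V := by omega
        omega
      rw [le_sub_iff_add_le, le_div_iff₀ hδpos]
      have : ((D.ncard : ℝ) + 2) * ((δ : ℝ) + 1) ≤ 3 * (Fintype.card V : ℝ) := by
        exact_mod_cast key
      linarith
  · -- small δ : take D = univ
    push_neg at hδ2
    refine ⟨Set.univ, ?_, fun v _ => Set.mem_univ v, ?_, ?_, ?_⟩
    · intro v
      rw [Aux16.setDist_eq_zero (Set.mem_univ v)]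
      omega
    · intro v hv
      rw [Aux16.setDist_eq_zero (Set.mem_univ v)] at hv
      omega
    · exact (SimpleGraph.induceUnivIso G).connected_iff.mpr hG
    · have hcard : (Set.univ : Set V).ncard = Fintype.card V := by
        rw [Set.ncard_univ, Nat.card_eq_fintype_card]
      rw [hcard, le_sub_iff_add_le, le_div_iff₀ hδpos]
      have hδ1 : (δ : ℝ) ≤ 1 := by exact_mod_cast Nat.lt_succ_iff.mp hδ2
      have hn' : (4 : ℝ) ≤ (Fintype.card V : ℝ) := by exact_mod_cast hn
      nlinarith
end

section
/- For every nontrivial connected graph G, tpc(G) > pvc(G). -/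
open SimpleGraph

variable {V : Type*} {α : Type*}

/-- A walk in a vertex-colored graph is a *vertex-proper* walk if any two internal
adjacent vertices on it differ in color. -/
def IsVertexProperWalk {G : SimpleGraph V} (cv : V → α) {u v : V} (w : G.Walk u v) : Prop :=
  ∀ i : ℕ, 1 ≤ i → i + 1 < w.length →
    cv (w.support.getD i u) ≠ cv (w.support.getD (i + 1) u)

/-- The proper vertex connection number: the smallest number of colors in a vertex coloring
such that any two vertices are joined by a vertex-proper path; it is `0` by convention for
complete graphs. -/
noncomputable def pvc (G : SimpleGraph V) : ℕ := by
  classical exact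
    if G = (⊤ : SimpleGraph V) then 0
    else sInf {k | ∃ cv : V → Fin k,
      ∀ u v : V, ∃ w : G.Walk u v, w.IsPath ∧ IsVertexProperWalk cv w}



section Aux
variable {V : Type*}
open Fin.NatCast

private lemma fin2_ne {m n : ℕ} (h : m = n + 1) : ((m : Fin 2)) ≠ (n : Fin 2) := by
  intro hc
  have := congrArg Fin.val hc
  simp [Fin.val_natCast] at this
  omega

private lemma chainB {G : SimpleGraph V} (hG : G.Connected) (r : V) :
    ∀ {x v : V} (q : G.Walk x v), G.dist r x + q.length = G.dist r v →
      List.Chain' (fun a b => ((G.dist r a : Fin 2)) ≠ ((G.dist r b : Fin 2))) q.support := by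
  intro x v q
  induction q with
  | nil => simp [List.Chain']
  | @cons x y v h q ih =>
    intro hq
    obtain ⟨wry, hwry⟩ := hG.exists_walk_length_eq_dist r y
    have h1 : G.dist r v ≤ G.dist r y + q.length := by
      have := dist_le (wry.append q)
      simpa [Walk.length_append, hwry] using this
    obtain ⟨wrx, hwrx⟩ := hG.exists_walk_length_eq_dist r x
    have h2 : G.dist r y ≤ G.dist r x + 1 := by
      have := dist_le (wrx.append (Walk.cons h Walk.nil))
      simpa [Walk.length_append, hwrx] using this
    have hlen : (Walk.cons h q).length = q.length + 1 := by simp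
    have hdy : G.dist r y = G.dist r x + 1 := by omega
    have hq' : G.dist r y + q.length = G.dist r v := by omega
    have hch := ih hq'
    have hs := q.support_eq_cons
    rw [Walk.support_cons, hs, List.Chain', List.isChain_cons_cons]
    exact ⟨(fin2_ne hdy).symm, hs ▸ hch⟩
end Aux


section Aux2
variable {V : Type*}

private lemma lemA {G : SimpleGraph V} (hG : G.Connected) {r v : V} (c : V → Fin 2)
    (hc : ∀ a b : V, G.dist r a = G.dist r b + 1 → c a ≠ c b)
    (q : G.Walk r v) (hq : q.IsPath)
    (hqc : List.Chain' (fun a b => c a ≠ c b) q.support) :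
    ∀ (n : ℕ) {u : V} (p : G.Walk u r), p.length = n → p.length = G.dist r u →
      ∃ w : G.Walk u v, w.IsPath ∧ List.Chain' (fun a b => c a ≠ c b) w.support ∧
        ∀ a ∈ w.support, a ∈ p.support ∨ a ∈ q.support := by
  classical
  intro n
  induction n using Nat.strong_induction_on with
  | _ n ih =>
    intro u p hn hp
    by_cases hu : u ∈ q.support
    · refine ⟨q.dropUntil u hu, hq.dropUntil hu, ?_,
        fun a ha => Or.inr (q.support_dropUntil_subset hu ha)⟩
      have hspec := q.take_spec hu
      have hsup : q.support = (q.takeUntil u hu).support ++ (q.dropUntil u hu).support.tail := by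
        conv_lhs => rw [← hspec]
        exact Walk.support_append _ _
      have hne : (q.takeUntil u hu).support ≠ [] := Walk.support_ne_nil _
      have hlast : (q.takeUntil u hu).support.getLast hne = u := Walk.getLast_support _
      have h2 : (q.takeUntil u hu).support.dropLast ++ [u] = (q.takeUntil u hu).support := by
        have h2' := List.dropLast_append_getLast hne
        rw [hlast] at h2'
        exact h2'
      have h3 : (q.dropUntil u hu).support = u :: (q.dropUntil u hu).support.tail :=
        Walk.support_eq_cons _
      have hsuf : (q.dropUntil u hu).support <:+ q.support := by
        refine ⟨(q.takeUntil u hu).support.dropLast, ?_⟩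
        rw [h3, hsup, ← h2]
        simp
        nth_rewrite 2 [← h2]
        rw [List.append_assoc, List.singleton_append, ← h3]
      exact hqc.suffix hsuf
    · cases p with
      | nil => exact absurd q.start_mem_support hu
      | @cons _ y _ h p' =>
        have hy1 : G.dist r y ≤ p'.length := by
          have := dist_le p'
          rwa [SimpleGraph.dist_comm] at this
        obtain ⟨wry, hwry⟩ := hG.exists_walk_length_eq_dist r y
        have hy2 : G.dist r u ≤ G.dist r y + 1 := by
          have := dist_le (wry.append (Walk.cons h.symm Walk.nil))
          simpa [Walk.length_append, hwry] using this
        have hlcons : (Walk.cons h p').length = p'.length + 1 := by simp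
        have hdy : G.dist r y = p'.length := by omega
        have hdu : G.dist r u = G.dist r y + 1 := by omega
        obtain ⟨w', hw'p, hw'c, hw's⟩ := ih p'.length (by omega) p' rfl hdy.symm
        have hunot : u ∉ w'.support := by
          intro hmem
          rcases hw's u hmem with hps | hqs
          · have hd1 : G.dist u r ≤ (p'.dropUntil u hps).length := dist_le _
            have hd2 := Walk.length_dropUntil_le p' hps
            rw [SimpleGraph.dist_comm] at hd1
            omega
          · exact hu hqs
        refine ⟨Walk.cons h w', hw'p.cons hunot, ?_, ?_⟩
        · have hs := w'.support_eq_cons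
          rw [Walk.support_cons, hs, List.Chain', List.isChain_cons_cons]
          exact ⟨hc u y hdu, hs ▸ hw'c⟩
        · intro a ha
          rw [Walk.support_cons, List.mem_cons] at ha
          rcases ha with rfl | ha
          · exact Or.inl (Walk.start_mem_support _)
          · rcases hw's a ha with hps | hqs
            · exact Or.inl (by rw [Walk.support_cons]; exact List.mem_cons_of_mem _ hps)
            · exact Or.inr hqs
end Aux2


section Aux3
variable {V : Type*}
open Fin.NatCast

private lemma chain'_to_vpw {α : Type*} {G : SimpleGraph V} (cv : V → α) {u v : V}
    (w : G.Walk u v) (h : List.Chain' (fun a b => cv a ≠ cv b) w.support) :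
    IsVertexProperWalk cv w := by
  intro i _ h2
  have hl : w.support.length = w.length + 1 := w.length_support
  have hi : i < w.support.length := by omega
  have hi1 : i + 1 < w.support.length := by omega
  rw [List.getD_eq_getElem _ _ hi, List.getD_eq_getElem _ _ hi1]
  have := List.isChain_iff_getElem.mp h i (by omega)
  simpa [List.get_eq_getElem] using this

private lemma pvc_two {G : SimpleGraph V} (hG : G.Connected) [Nonempty V] :
    ∃ cv : V → Fin 2, ∀ u v : V, ∃ w : G.Walk u v, w.IsPath ∧ IsVertexProperWalk cv w := by
  obtain ⟨r⟩ := ‹Nonempty V›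
  refine ⟨fun x => ((G.dist r x : Fin 2)), fun u v => ?_⟩
  obtain ⟨q, hqp, hql⟩ := hG.exists_path_of_dist r v
  have hqc := chainB hG r q (by rw [hql]; simp)
  obtain ⟨p, hpl⟩ := hG.exists_walk_length_eq_dist u r
  have hpl' : p.length = G.dist r u := by rw [hpl, SimpleGraph.dist_comm]
  obtain ⟨w, hwp, hwc, -⟩ := lemA hG (fun x => ((G.dist r x : Fin 2)))
    (fun a b hab => fin2_ne hab) q hqp hqc p.length p rfl hpl'
  exact ⟨w, hwp, chain'_to_vpw _ w hwc⟩
end Aux3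

private lemma tpc_nonempty [Fintype V] {G : SimpleGraph V} (hG : G.Connected) :
    ∃ (k : ℕ) (cv : V → Fin k) (ce : Sym2 V → Fin k), TotalProperConnected G cv ce := by
  classical
  set n := Fintype.card V with hn
  set m := Fintype.card (Sym2 V) with hm
  set ev := Fintype.equivFin V
  set ee := Fintype.equivFin (Sym2 V)
  refine ⟨n + m, fun x => Fin.castAdd m (ev x), fun e => Fin.natAdd n (ee e), fun u v => ?_⟩
  obtain ⟨w0⟩ := hG.preconnected u v
  set p := w0.bypass with hpdef
  have hp : p.IsPath := w0.bypass_isPath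
  have hce_inj : Function.Injective (fun e : Sym2 V => Fin.natAdd n (ee e)) := by
    intro a b hab
    apply ee.injective
    have := congrArg Fin.val hab
    simp only [Fin.natAdd] at this
    exact Fin.ext (Nat.add_left_cancel this)
  have hcv_inj : Function.Injective (fun x : V => Fin.castAdd m (ev x)) := by
    intro a b hab
    apply ev.injective
    have := congrArg Fin.val hab
    simpa using Fin.ext this
  have hmix : ∀ (x : V) (e : Sym2 V), Fin.castAdd m (ev x) ≠ Fin.natAdd n (ee e) := by
    intro x e hxe
    have := congrArg Fin.val hxe
    simp only [Fin.coe_castAdd, Fin.coe_natAdd] at this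
    have hx := (ev x).isLt
    omega
  have hel : p.edges.length = p.length := p.length_edges
  have hsl : p.support.length = p.length + 1 := p.length_support
  have hen : p.edges.Nodup := Walk.edges_nodup_of_support_nodup hp.support_nodup
  have hsn : p.support.Nodup := hp.support_nodup
  refine ⟨p, hp, ?_, ?_, ?_⟩
  · intro i hi
    rw [List.getD_eq_getElem _ _ (by omega), List.getD_eq_getElem _ _ (by omega)]
    intro hcon
    have := hce_inj hcon
    have := (hen.getElem_inj_iff (hi := by omega) (hj := by omega)).mp this
    omega
  · intro i hi1 hi2
    rw [List.getD_eq_getElem _ _ (by omega), List.getD_eq_getElem _ _ (by omega)]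
    intro hcon
    have := hcv_inj hcon
    have := (hsn.getElem_inj_iff (hi := by omega) (hj := by omega)).mp this
    omega
  · intro i hi1 hi2
    rw [List.getD_eq_getElem _ _ (show i < p.support.length by omega),
      List.getD_eq_getElem _ _ (show i - 1 < p.edges.length by omega),
      List.getD_eq_getElem _ _ (show i < p.edges.length by omega)]
    exact ⟨hmix _ _, hmix _ _⟩

/-- For every nontrivial connected graph `G`, `tpc G > pvc G`. -/
theorem stmt_18 {V : Type*} [Fintype V] (G : SimpleGraph V)
    (hG : G.Connected) (hV : Nontrivial V) :
    pvc G < tpc G := by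
  classical
  have hne : {k | ∃ (cv : V → Fin k) (ce : Sym2 V → Fin k),
      TotalProperConnected G cv ce}.Nonempty := by
    obtain ⟨k, cv, ce, h⟩ := tpc_nonempty hG
    exact ⟨k, cv, ce, h⟩
  have hmem : tpc G ∈ {k | ∃ (cv : V → Fin k) (ce : Sym2 V → Fin k),
      TotalProperConnected G cv ce} := by
    rw [tpc]
    exact Nat.sInf_mem hne
  obtain ⟨cv, ce, htp⟩ := hmem
  by_cases hT : G = (⊤ : SimpleGraph V)
  · have hp0 : pvc G = 0 := by unfold pvc; rw [if_pos hT]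
    rw [hp0]
    rcases Nat.eq_zero_or_pos (tpc G) with h0 | h0
    · exfalso
      have := cv (Classical.arbitrary V)
      rw [h0] at this
      exact this.elim0
    · exact h0
  · obtain ⟨x, y, hxy, hnadj⟩ : ∃ x y : V, x ≠ y ∧ ¬ G.Adj x y := by
      by_contra hcon
      push_neg at hcon
      apply hT
      ext a b
      simp only [top_adj]
      exact ⟨fun h => h.ne, fun h => hcon a b h⟩
    obtain ⟨w, hwp, hw1, hw2, hw3⟩ := htp x y
    have hl0 : w.length ≠ 0 := fun h => hxy (Walk.eq_of_length_eq_zero h)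
    have hl1 : w.length ≠ 1 := fun h => hnadj (Walk.adj_of_length_eq_one h)
    have hlen : 2 ≤ w.length := by omega
    have hab := (hw3 1 le_rfl (by omega)).1
    have had := (hw3 1 le_rfl (by omega)).2
    have hbd := hw1 0 (by omega)
    have h3 : 3 ≤ tpc G := by
      have hc3 : ({cv (w.support.getD 1 x), ce (w.edges.getD 0 s(x, x)),
          ce (w.edges.getD 1 s(x, x))} : Finset (Fin (tpc G))).card = 3 := by
        rw [Finset.card_insert_of_notMem (by
            simp only [Finset.mem_insert, Finset.mem_singleton]
            push_neg
            exact ⟨hab, had⟩),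
          Finset.card_insert_of_notMem (by
            simp only [Finset.mem_singleton]
            exact hbd), Finset.card_singleton]
    -- note: hab : cv _ ≠ ce (getD (1-1)) ; 1-1 reduces to 0
      calc (3 : ℕ) = _ := hc3.symm
        _ ≤ Fintype.card (Fin (tpc G)) := Finset.card_le_univ _
        _ = tpc G := Fintype.card_fin _
    have hp2 : pvc G ≤ 2 := by
      unfold pvc
      rw [if_neg hT]
      exact Nat.sInf_le (pvc_two hG)
    omega
end
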